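/- arXiv:1107.2351 — 5 statements merged into one kernel-verified Lean document; each statement's English description precedes it below -/
import Mathlib

section
/- Let Ω ⊂ ℝⁿ be a bounded domain with diameter D. Let X be a C² vector field on Ω satisfying ΔX = 2∇_X X − V(x, X(x)) in Ω (componentwise: ΔX^k = 2Σ_j X^j ∂_j X^k − V^k(x, X(x))), where V : Ω × ℝⁿ → ℝⁿ is C¹ and the composite vector field x ↦ V(x, X(x)) satisfies (V(y, X(y)) − V(x, X(x))) · (y − x) ≥ 0 for all x, y ∈ Ω. Let ψ : [0, D/2) → ℝ be C² with ψ(0) = 0, ψ'(s) < 0 for all s, and ψ'' ≤ −2ψ'ψ. Define C(x, y) = (X(y) − X(x)) · (y − x)/|y − x| + 2ψ(|y − x|/2) for x ≠ y in Ω and C(x, x) = 0. Then C cannot attain a negative minimum at an interior point: there is no (x₀, y₀) ∈ Ω × Ω with C(x₀, y₀) < 0 at which C attains a local minimum over Ω × Ω. -/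
open scoped RealInnerProductSpace
open Set MeasureTheory Filter Finset


lemma aux_second_test {g g' : ℝ → ℝ} {b : ℝ} (hmin : IsLocalMin g 0)
    (hg : ∀ᶠ t in nhds (0:ℝ), HasDerivAt g (g' t) t) (hg'0 : HasDerivAt g' b 0) : 0 ≤ b := by
  by_contra hb
  push_neg at hb
  have h0 : g' 0 = 0 := hmin.hasDerivAt_eq_zero hg.self_of_nhds
  have hs := hasDerivAt_iff_tendsto_slope.1 hg'0
  have hlt : slope g' 0 ⁻¹' Iio (b/2) ∈ nhdsWithin (0:ℝ) {(0:ℝ)}ᶜ :=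
    hs (Iio_mem_nhds (by linarith))
  have h1 : ∀ᶠ t in nhdsWithin (0:ℝ) (Ioi 0), g' t < 0 := by
    have hmono : nhdsWithin (0:ℝ) (Ioi 0) ≤ nhdsWithin (0:ℝ) {(0:ℝ)}ᶜ :=
      nhdsWithin_mono _ (fun x hx => ne_of_gt hx)
    filter_upwards [hmono hlt, self_mem_nhdsWithin] with t ht ht0
    have hslope : slope g' 0 t = g' t / t := by
      simp [slope_def_field, h0]
    rw [Set.mem_preimage, Set.mem_Iio, hslope] at ht
    have h2 : g' t < b / 2 * t := (div_lt_iff₀ ht0).mp ht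
    have h3 : b / 2 * t < 0 := mul_neg_of_neg_of_pos (by linarith) ht0
    linarith
  have h2 : ∀ᶠ t in nhds (0:ℝ), HasDerivAt g (g' t) t ∧ g 0 ≤ g t := hg.and hmin
  obtain ⟨ε, hε, hball⟩ := Metric.eventually_nhds_iff.mp h2
  obtain ⟨u, huo, hu0, hsub⟩ := mem_nhdsWithin.mp h1
  obtain ⟨δ, hδ, hδsub⟩ := Metric.isOpen_iff.mp huo 0 hu0
  set t₁ := min ε δ / 2 with ht₁
  have ht₁pos : 0 < t₁ := by positivity
  have hmε := min_le_left ε δ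
  have hmδ := min_le_right ε δ
  have hkey : ∀ t ∈ Icc (0:ℝ) t₁, HasDerivAt g (g' t) t ∧ g 0 ≤ g t := by
    intro t ⟨h1t, h2t⟩
    apply hball
    rw [Real.dist_eq, sub_zero, abs_of_nonneg h1t]
    linarith
  have hanti : StrictAntiOn g (Icc 0 t₁) := by
    apply strictAntiOn_of_deriv_neg (convex_Icc _ _)
    · intro t ht
      exact ((hkey t ht).1).continuousAt.continuousWithinAt
    · intro t ht
      rw [interior_Icc] at ht
      have htu : t ∈ u := by
        apply hδsub
        rw [Metric.mem_ball, Real.dist_eq, sub_zero, abs_of_nonneg (le_of_lt ht.1)]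
        linarith [ht.2]
      have : g' t < 0 := hsub ⟨htu, ht.1⟩
      rw [(hkey t ⟨le_of_lt ht.1, le_of_lt ht.2⟩).1.deriv]
      exact this
  have hlt2 : g t₁ < g 0 := hanti ⟨le_refl _, le_of_lt ht₁pos⟩ ⟨le_of_lt ht₁pos, le_refl _⟩ ht₁pos
  have hge : g 0 ≤ g t₁ := (hkey t₁ ⟨le_of_lt ht₁pos, le_refl _⟩).2
  linarith

lemma aux_trace {n : ℕ} (B : EuclideanSpace ℝ (Fin n) →L[ℝ] EuclideanSpace ℝ (Fin n) →L[ℝ] ℝ)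
    (hpos : ∀ v, 0 ≤ B v v) (e : EuclideanSpace ℝ (Fin n)) (he : ‖e‖ = 1) :
    B e e ≤ ∑ i, B (EuclideanSpace.single i 1) (EuclideanSpace.single i 1) := by
  set N : EuclideanSpace ℝ (Fin n) → ℝ := fun v => Real.sqrt (B v v) with hN
  have hNnonneg : ∀ v, 0 ≤ N v := fun v => Real.sqrt_nonneg _
  have hNsq : ∀ v, N v ^ 2 = B v v := fun v => Real.sq_sqrt (hpos v)
  have hCS : ∀ u v, B u v + B v u ≤ 2 * N u * N v := by
    intro u v
    have hq : ∀ t : ℝ, 0 ≤ B u u * (t * t) + (B u v + B v u) * t + B v v := by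
      intro t
      have h := hpos (t • u + v)
      have hexp : B (t • u + v) (t • u + v) = B u u * (t * t) + (B u v + B v u) * t + B v v := by
        simp [map_add, _root_.map_smul, ContinuousLinearMap.add_apply, ContinuousLinearMap.smul_apply,
          smul_eq_mul]
        ring
      linarith [hexp ▸ h]
    have hd := discrim_le_zero hq
    rw [discrim] at hd
    have h2 : (B u v + B v u) ^ 2 ≤ 4 * (B u u) * (B v v) := by nlinarith [hd]
    have h3 : B u v + B v u ≤ |B u v + B v u| := le_abs_self _
    have h4 : |B u v + B v u| = Real.sqrt ((B u v + B v u) ^ 2) := (Real.sqrt_sq_eq_abs _).symm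
    have h5 : Real.sqrt ((B u v + B v u) ^ 2) ≤ Real.sqrt (4 * B u u * B v v) :=
      Real.sqrt_le_sqrt h2
    have h6 : Real.sqrt (4 * B u u * B v v) = 2 * N u * N v := by
      rw [show (4:ℝ) * B u u * B v v = 2 ^ 2 * (B u u * B v v) by ring]
      rw [Real.sqrt_mul (by positivity), Real.sqrt_sq (by norm_num),
        Real.sqrt_mul (hpos u)]
      ring
    linarith
  have hsub : ∀ u v, N (u + v) ≤ N u + N v := by
    intro u v
    have h1 : B (u+v) (u+v) = B u u + (B u v + B v u) + B v v := by
      simp [map_add, ContinuousLinearMap.add_apply]; ring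
    have h2 : B (u+v) (u+v) ≤ (N u + N v) ^ 2 := by
      rw [h1]
      have := hCS u v
      nlinarith [hNsq u, hNsq v]
    calc N (u+v) = Real.sqrt (B (u+v) (u+v)) := rfl
      _ ≤ Real.sqrt ((N u + N v)^2) := Real.sqrt_le_sqrt h2
      _ = |N u + N v| := Real.sqrt_sq_eq_abs _
      _ = N u + N v := abs_of_nonneg (by positivity)
  have hsmul : ∀ (c : ℝ) v, N (c • v) = |c| * N v := by
    intro c v
    have h1 : B (c • v) (c • v) = c^2 * B v v := by
      simp [_root_.map_smul, ContinuousLinearMap.smul_apply, smul_eq_mul]; ring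
    rw [hN]
    simp only [h1]
    rw [Real.sqrt_mul (sq_nonneg c), Real.sqrt_sq_eq_abs]
  have hN0 : N 0 = 0 := by simp [hN]
  have hsum : ∀ (s : Finset (Fin n)) (c : Fin n → ℝ) (f : Fin n → EuclideanSpace ℝ (Fin n)),
      N (∑ i ∈ s, c i • f i) ≤ ∑ i ∈ s, |c i| * N (f i) := by
    intro s
    induction s using Finset.induction with
    | empty => intro c f; simp [hN0]
    | insert _ _ hns ih =>
      intro c f
      rename_i a s
      rw [Finset.sum_insert hns, Finset.sum_insert hns]
      calc N (c a • f a + ∑ i ∈ s, c i • f i) ≤ N (c a • f a) + N (∑ i ∈ s, c i • f i) :=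
            hsub _ _
        _ ≤ |c a| * N (f a) + ∑ i ∈ s, |c i| * N (f i) := by
            rw [hsmul]; exact add_le_add_right (ih c f) _
  have hdecomp : e = ∑ i, e i • EuclideanSpace.single i 1 := by
    apply PiLp.ext
    intro j
    rw [WithLp.ofLp_sum, Finset.sum_apply]
    simp [PiLp.smul_apply, EuclideanSpace.single_apply, smul_eq_mul, mul_ite,
      Finset.sum_ite_eq']
  have hNe : N e ≤ ∑ i, |e i| * N (EuclideanSpace.single i 1) := by
    calc N e = N (∑ i, e i • EuclideanSpace.single i 1) := by rw [← hdecomp]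
      _ ≤ _ := hsum _ _ _
  have hsum1 : ∑ i, e i ^ 2 = 1 := by
    have h := EuclideanSpace.norm_eq e
    rw [he] at h
    have h2 : Real.sqrt (∑ i, e i ^ 2) = 1 := by
      rw [h]; congr 1; apply Finset.sum_congr rfl; intro i _
      rw [Real.norm_eq_abs, sq_abs]
    have hnn : (0:ℝ) ≤ ∑ i, e i ^ 2 := Finset.sum_nonneg (fun i _ => sq_nonneg (e i))
    nlinarith [Real.sq_sqrt hnn, h2]
  have hcs2 := Finset.sum_mul_sq_le_sq_mul_sq Finset.univ (fun i => |e i|) (fun i => N (EuclideanSpace.single i 1))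
  have hfin : (∑ i, |e i| * N (EuclideanSpace.single i 1))^2 ≤ ∑ i, B (EuclideanSpace.single i 1) (EuclideanSpace.single i 1) := by
    calc (∑ i, |e i| * N (EuclideanSpace.single i 1))^2
        ≤ (∑ i, |e i|^2) * ∑ i, N (EuclideanSpace.single i 1)^2 := hcs2
      _ = (∑ i, e i^2) * ∑ i, B (EuclideanSpace.single i 1) (EuclideanSpace.single i 1) := by
          congr 1
          · exact Finset.sum_congr rfl (fun i _ => sq_abs _)
          · exact Finset.sum_congr rfl (fun i _ => hNsq _)
      _ = _ := by rw [hsum1]; ring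
  calc B e e = N e ^ 2 := (hNsq e).symm
    _ ≤ (∑ i, |e i| * N (EuclideanSpace.single i 1))^2 := by
        apply pow_le_pow_left₀ (hNnonneg e) hNe
    _ ≤ _ := hfin

lemma aux_curve {E : Type*} [NormedAddCommGroup E] [NormedSpace ℝ E]
    {Ω : Set E} (hΩ : IsOpen Ω) {f : E → ℝ} (hf : ContDiffOn ℝ 2 f Ω)
    {c : E} (hc : c ∈ Ω) (v : E) :
    (∀ᶠ t in nhds (0:ℝ), HasDerivAt (fun t' => f (c + t' • v)) (fderiv ℝ f (c + t • v) v) t)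
    ∧ HasDerivAt (fun t : ℝ => fderiv ℝ f (c + t • v) v) (fderiv ℝ (fderiv ℝ f) c v v) 0 := by
  have hcurve : ∀ t : ℝ, HasDerivAt (fun t' : ℝ => c + t' • v) v t := by
    intro t
    simpa using ((hasDerivAt_id t).smul_const v).const_add c
  have h0 : c + (0:ℝ) • v = c := by simp
  constructor
  · have hcont : Continuous (fun t : ℝ => c + t • v) :=
      continuous_const.add (continuous_id.smul continuous_const)
    have hev : ∀ᶠ t in nhds (0:ℝ), c + t • v ∈ Ω := by
      have h0' : c + (0:ℝ) • v ∈ Ω := by simpa [h0] using hc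
      exact hcont.continuousAt.preimage_mem_nhds (hΩ.mem_nhds h0')
    filter_upwards [hev] with t ht
    have hd : DifferentiableAt ℝ f (c + t • v) :=
      (hf.contDiffAt (hΩ.mem_nhds ht)).differentiableAt (by norm_num)
    exact hd.hasFDerivAt.comp_hasDerivAt t (hcurve t)
  · have hd1 : ContDiffAt ℝ 1 (fderiv ℝ f) c :=
      (hf.contDiffAt (hΩ.mem_nhds hc)).fderiv_right (le_refl 2)
    have hdiff : DifferentiableAt ℝ (fderiv ℝ f) c := hd1.differentiableAt (by norm_num)
    have hF : HasFDerivAt (fderiv ℝ f) (fderiv ℝ (fderiv ℝ f) c) (c + (0:ℝ) • v) := by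
      rw [h0]; exact hdiff.hasFDerivAt
    have h1 : HasDerivAt (fun t : ℝ => fderiv ℝ f (c + t • v)) (fderiv ℝ (fderiv ℝ f) c v) 0 :=
      hF.comp_hasDerivAt 0 (hcurve 0)
    have h2 := h1.clm_apply (hasDerivAt_const (0:ℝ) v)
    simpa using h2

lemma aux_decomp {n : ℕ} (x : EuclideanSpace ℝ (Fin n)) :
    x = ∑ i, x i • EuclideanSpace.single i 1 := by
  apply PiLp.ext
  intro j
  rw [WithLp.ofLp_sum, Finset.sum_apply]
  simp [PiLp.smul_apply, EuclideanSpace.single_apply, smul_eq_mul, mul_ite,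
    Finset.sum_ite_eq']

noncomputable def lap {n : ℕ} (f : EuclideanSpace ℝ (Fin n) → ℝ) (x : EuclideanSpace ℝ (Fin n)) : ℝ :=
  ∑ i, fderiv ℝ (fun y => fderiv ℝ f y (EuclideanSpace.single i 1)) x
      (EuclideanSpace.single i 1)

set_option maxHeartbeats 4000000 in
theorem stmt_0 {n : ℕ} (Ω : Set (EuclideanSpace ℝ (Fin n)))
    (hΩ : IsOpen Ω) (hconn : IsConnected Ω) (hbd : Bornology.IsBounded Ω)
    (D : ℝ) (hD : Metric.diam Ω = D)
    (X : EuclideanSpace ℝ (Fin n) → EuclideanSpace ℝ (Fin n))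
    (V : EuclideanSpace ℝ (Fin n) → EuclideanSpace ℝ (Fin n) → EuclideanSpace ℝ (Fin n))
    (hX : ContDiffOn ℝ 2 X Ω)
    (hV : ContDiffOn ℝ 1 (fun p : EuclideanSpace ℝ (Fin n) × EuclideanSpace ℝ (Fin n) => V p.1 p.2) (Ω ×ˢ univ))
    (heq : ∀ x ∈ Ω, ∀ k : Fin n, lap (fun y => X y k) x =
      2 * ∑ j, X x j * fderiv ℝ (fun y => X y k) x (EuclideanSpace.single j 1)
        - V x (X x) k)
    (hVexp : ∀ x ∈ Ω, ∀ y ∈ Ω, 0 ≤ ⟪V y (X y) - V x (X x), y - x⟫)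
    (ψ ψ' ψ'' : ℝ → ℝ)
    (hψ0 : ψ 0 = 0)
    (hψd1 : ∀ s ∈ Ico (0:ℝ) (D/2), HasDerivWithinAt ψ (ψ' s) (Ico (0:ℝ) (D/2)) s)
    (hψd2 : ∀ s ∈ Ico (0:ℝ) (D/2), HasDerivWithinAt ψ' (ψ'' s) (Ico (0:ℝ) (D/2)) s)
    (hψc : ContinuousOn ψ'' (Ico (0:ℝ) (D/2)))
    (hψneg : ∀ s ∈ Ico (0:ℝ) (D/2), ψ' s < 0)
    (hODE : ∀ s ∈ Ico (0:ℝ) (D/2), ψ'' s ≤ -2 * ψ' s * ψ s)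
    (C : EuclideanSpace ℝ (Fin n) → EuclideanSpace ℝ (Fin n) → ℝ)
    (hCdiag : ∀ x, C x x = 0)
    (hC : ∀ x y, x ≠ y → C x y =
      ⟪X y - X x, ‖y - x‖⁻¹ • (y - x)⟫ + 2 * ψ (‖y - x‖ / 2)) :
    ¬ ∃ x₀ ∈ Ω, ∃ y₀ ∈ Ω, C x₀ y₀ < 0 ∧
      IsLocalMinOn (fun p : EuclideanSpace ℝ (Fin n) × EuclideanSpace ℝ (Fin n) => C p.1 p.2) (Ω ×ˢ Ω) (x₀, y₀) := by
  rintro ⟨x₀, hx₀, y₀, hy₀, hCneg, hmin⟩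
  have hne : x₀ ≠ y₀ := by
    rintro rfl
    rw [hCdiag] at hCneg
    exact lt_irrefl 0 hCneg
  set b := y₀ - x₀ with hbdef
  have hb : b ≠ 0 := sub_ne_zero.mpr (Ne.symm hne)
  set d := ‖b‖ with hddef
  have hd : 0 < d := norm_pos_iff.mpr hb
  set e := d⁻¹ • b with hedef
  have he : ‖e‖ = 1 := by
    rw [hedef, hddef]; exact norm_smul_inv_norm hb
  have hbe : b = d • e := by
    rw [hedef, smul_smul, mul_inv_cancel₀ (ne_of_gt hd), one_smul]
  set s := d / 2 with hsdef
  -- step 1 : d < D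
  have hdD : d < D := by
    obtain ⟨r, hr, hball⟩ := Metric.isOpen_iff.mp hΩ y₀ hy₀
    have hz : y₀ + (r/2) • e ∈ Ω := by
      apply hball
      rw [Metric.mem_ball, dist_eq_norm]
      have h1 : y₀ + (r/2) • e - y₀ = (r/2) • e := by abel
      rw [h1, norm_smul, he, Real.norm_eq_abs, abs_of_pos (by linarith), mul_one]
      linarith
    have hdist := Metric.dist_le_diam_of_mem hbd hx₀ hz
    rw [hD] at hdist
    have h2 : dist x₀ (y₀ + (r/2) • e) = d + r/2 := by
      rw [dist_eq_norm]
      have h3 : x₀ - (y₀ + (r/2) • e) = -((d + r/2) • e) := by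
        rw [add_smul, ← hbe, hbdef]
        abel
      rw [h3, norm_neg, norm_smul, he, Real.norm_eq_abs, abs_of_pos (by linarith), mul_one]
    linarith
  have hsI : s ∈ Ico (0:ℝ) (D/2) := ⟨by positivity, by rw [hsdef]; linarith⟩
  have hspos : 0 < s := by positivity
  -- ψ derivatives as genuine derivatives
  have hψat : ∀ u : ℝ, u ∈ Ioo (0:ℝ) (D/2) → HasDerivAt ψ (ψ' u) u := by
    intro u hu
    exact (hψd1 u ⟨le_of_lt hu.1, hu.2⟩).hasDerivAt
      (mem_of_superset (Ioo_mem_nhds hu.1 hu.2) Ioo_subset_Ico_self)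
  have hψ'at : HasDerivAt ψ' (ψ'' s) s :=
    (hψd2 s hsI).hasDerivAt
      (mem_of_superset (Ioo_mem_nhds hspos (by rw [hsdef]; linarith)) Ioo_subset_Ico_self)
  -- genuine local min
  have hΩΩ : (Ω ×ˢ Ω) ∈ nhds (x₀, y₀) := (hΩ.prod hΩ).mem_nhds ⟨hx₀, hy₀⟩
  have hmin' : IsLocalMin (fun p : EuclideanSpace ℝ (Fin n) × EuclideanSpace ℝ (Fin n) => C p.1 p.2) (x₀, y₀) := by
    have hfeq := nhdsWithin_eq_nhds.2 hΩΩ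
    have h' : IsMinFilter (fun p : EuclideanSpace ℝ (Fin n) × EuclideanSpace ℝ (Fin n) => C p.1 p.2)
        (nhdsWithin (x₀, y₀) (Ω ×ˢ Ω)) (x₀, y₀) := hmin
    rw [hfeq] at h'
    exact h'
  have hmincurve : ∀ (γ₁ γ₂ : ℝ → EuclideanSpace ℝ (Fin n)), ContinuousAt γ₁ 0 → ContinuousAt γ₂ 0 →
      γ₁ 0 = x₀ → γ₂ 0 = y₀ → IsLocalMin (fun t => C (γ₁ t) (γ₂ t)) 0 := by
    intro γ₁ γ₂ h1 h2 e1 e2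
    have hg : ContinuousAt (fun t => (γ₁ t, γ₂ t)) 0 := h1.prodMk h2
    have hm : IsLocalMin (fun p : EuclideanSpace ℝ (Fin n) × EuclideanSpace ℝ (Fin n) => C p.1 p.2)
        ((fun t => (γ₁ t, γ₂ t)) 0) := by
      show IsLocalMin _ (γ₁ 0, γ₂ 0)
      rw [e1, e2]
      exact hmin'
    exact IsLocalMin.comp_continuous
      (f := fun p : EuclideanSpace ℝ (Fin n) × EuclideanSpace ℝ (Fin n) => C p.1 p.2)
      (g := fun t => (γ₁ t, γ₂ t)) (b := (0:ℝ)) hm hg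
  have hcongr : ∀ (g h : ℝ → ℝ), IsLocalMin g 0 → (∀ᶠ t in nhds (0:ℝ), g t = h t) → g 0 = h 0 →
      IsLocalMin h 0 := by
    intro g h hg heqgh h0
    have hg' : ∀ᶠ t in nhds (0:ℝ), g 0 ≤ g t := hg
    have : ∀ᶠ t in nhds (0:ℝ), h 0 ≤ h t := by
      filter_upwards [hg', heqgh] with t ha hb
      rw [← h0, ← hb]
      exact ha
    exact this
  -- F and its derivatives
  set F : EuclideanSpace ℝ (Fin n) → ℝ := fun z => (inner ℝ e (X z) : ℝ) with hFdef
  have hFcd : ContDiffOn ℝ 2 F Ω := by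
    rw [hFdef]
    exact ContDiffOn.inner ℝ contDiffOn_const hX
  have hXdiff : ∀ z ∈ Ω, DifferentiableAt ℝ X z := fun z hz =>
    (hX.contDiffAt (hΩ.mem_nhds hz)).differentiableAt (by norm_num)
  have hDF : ∀ z ∈ Ω, ∀ u, fderiv ℝ F z u = (inner ℝ e (fderiv ℝ X z u) : ℝ) := by
    intro z hz u
    have h1 : HasFDerivAt F ((innerSL ℝ e).comp (fderiv ℝ X z)) z := by
      have h2 := ((innerSL ℝ e).hasFDerivAt (x := X z)).comp z (hXdiff z hz).hasFDerivAt
      apply h2.congr_of_eventuallyEq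
      filter_upwards with y
      simp [hFdef, Function.comp]
    rw [h1.fderiv]
    simp
  -- translation variations
  have hvar : ∀ v : EuclideanSpace ℝ (Fin n), fderiv ℝ F y₀ v = fderiv ℝ F x₀ v ∧
      0 ≤ fderiv ℝ (fderiv ℝ F) y₀ v v - fderiv ℝ (fderiv ℝ F) x₀ v v := by
    intro v
    obtain ⟨hy1, hy2⟩ := aux_curve hΩ hFcd hy₀ v
    obtain ⟨hx1, hx2⟩ := aux_curve hΩ hFcd hx₀ v
    have hcont : ∀ c : EuclideanSpace ℝ (Fin n), ContinuousAt (fun t : ℝ => c + t • v) 0 :=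
      fun c => (continuous_const.add (continuous_id.smul continuous_const)).continuousAt
    have hmin0 := hmincurve (fun t => x₀ + t • v) (fun t => y₀ + t • v) (hcont x₀) (hcont y₀)
      (by simp) (by simp)
    have hall : ∀ t : ℝ, C (x₀ + t • v) (y₀ + t • v)
        = F (y₀ + t • v) - F (x₀ + t • v) + 2 * ψ s := by
      intro t
      have hnet : x₀ + t • v ≠ y₀ + t • v := by
        intro hcontra
        exact hne (add_right_cancel hcontra)
      have hch : (y₀ + t • v) - (x₀ + t • v) = b := by rw [hbdef]; abel
      rw [hC _ _ hnet, hch, ← hddef, ← hedef, ← hsdef, hFdef]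
      simp only []
      rw [real_inner_comm, inner_sub_right]
    have hgmin : IsLocalMin (fun t : ℝ => F (y₀ + t • v) - F (x₀ + t • v) + 2 * ψ s) 0 := by
      apply hcongr _ _ hmin0 (Filter.Eventually.of_forall hall)
      exact hall 0
    have hgd : ∀ᶠ t in nhds (0:ℝ), HasDerivAt (fun t' => F (y₀ + t' • v) - F (x₀ + t' • v) + 2 * ψ s)
        (fderiv ℝ F (y₀ + t • v) v - fderiv ℝ F (x₀ + t • v) v) t := by
      filter_upwards [hy1, hx1] with t h1 h2
      exact (h1.sub h2).add_const _
    have hg'd : HasDerivAt (fun t : ℝ => fderiv ℝ F (y₀ + t • v) v - fderiv ℝ F (x₀ + t • v) v)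
        (fderiv ℝ (fderiv ℝ F) y₀ v v - fderiv ℝ (fderiv ℝ F) x₀ v v) 0 := hy2.sub hx2
    constructor
    · have h0 := hgmin.hasDerivAt_eq_zero hgd.self_of_nhds
      have h0' : fderiv ℝ F (y₀ + (0:ℝ) • v) v - fderiv ℝ F (x₀ + (0:ℝ) • v) v = 0 := h0
      simp only [zero_smul, add_zero] at h0'
      exact sub_eq_zero.mp h0'
    · exact aux_second_test hgmin hgd hg'd
  have H1 : ∀ v, fderiv ℝ F y₀ v = fderiv ℝ F x₀ v := fun v => (hvar v).1
  -- second order: Q nonneg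
  set Q : EuclideanSpace ℝ (Fin n) → ℝ :=
    fun v => fderiv ℝ (fderiv ℝ F) y₀ v v - fderiv ℝ (fderiv ℝ F) x₀ v v with hQdef
  have H2 : ∀ v, 0 ≤ Q v := by
    intro v
    rw [hQdef]
    exact (hvar v).2
  -- stretching variation
  have H3 : -(2 * ψ'' s) ≤ Q e := by
    obtain ⟨hy1, hy2⟩ := aux_curve hΩ hFcd hy₀ e
    obtain ⟨hx1, hx2⟩ := aux_curve hΩ hFcd hx₀ (-e)
    have hcont : ∀ (c u : EuclideanSpace ℝ (Fin n)), ContinuousAt (fun t : ℝ => c + t • u) 0 :=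
      fun c u => (continuous_const.add (continuous_id.smul continuous_const)).continuousAt
    have hmin0 := hmincurve (fun t : ℝ => x₀ + t • (-e)) (fun t : ℝ => y₀ + t • e)
      (hcont _ _) (hcont _ _) (by simp) (by simp)
    have hyx : y₀ = x₀ + d • e := by
      rw [← hbe, hbdef]
      abel
    have heqt : ∀ᶠ t in nhds (0:ℝ), C (x₀ + t • (-e)) (y₀ + t • e)
        = F (y₀ + t • e) - F (x₀ + t • (-e)) + 2 * ψ (s + t) := by
      filter_upwards [Ioo_mem_nhds (show -(d/2) < (0:ℝ) by linarith)
        (show (0:ℝ) < d/2 by linarith)] with t ht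
      obtain ⟨ht1, ht2⟩ := ht
      have hpos : 0 < d + 2*t := by linarith
      have hch : (y₀ + t • e) - (x₀ + t • (-e)) = (d + 2*t) • e := by
        rw [hyx]
        module
      have he0 : e ≠ 0 := by
        intro h
        rw [h, norm_zero] at he
        norm_num at he
      have hne2 : x₀ + t • (-e) ≠ y₀ + t • e := by
        intro hcEq
        have h0 : (y₀ + t • e) - (x₀ + t • (-e)) = 0 := by rw [hcEq]; abel
        rw [hch] at h0
        exact (smul_ne_zero (ne_of_gt hpos) he0) h0
      rw [hC _ _ hne2, hch]
      have hnorm : ‖(d + 2*t) • e‖ = d + 2*t := by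
        rw [norm_smul, he, Real.norm_eq_abs, abs_of_pos hpos, mul_one]
      rw [hnorm]
      have hunit : (d + 2*t)⁻¹ • ((d + 2*t) • e) = e := by
        rw [smul_smul, inv_mul_cancel₀ (ne_of_gt hpos), one_smul]
      rw [hunit]
      have hψarg : (d + 2*t)/2 = s + t := by rw [hsdef]; ring
      rw [hψarg, hFdef]
      simp only []
      rw [real_inner_comm, inner_sub_right]
    have hgmin : IsLocalMin (fun t : ℝ => F (y₀ + t • e) - F (x₀ + t • (-e)) + 2 * ψ (s + t)) 0 := by
      apply hcongr _ _ hmin0 heqt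
      have h1 := hC x₀ y₀ hne
      rw [← hbdef, ← hddef, ← hedef, ← hsdef] at h1
      simp only [zero_smul, add_zero]
      rw [h1, hFdef]
      simp only []
      rw [real_inner_comm, inner_sub_right]
    have hsev : ∀ᶠ t in nhds (0:ℝ), s + t ∈ Ioo (0:ℝ) (D/2) := by
      have hcont2 : ContinuousAt (fun t : ℝ => s + t) 0 :=
        (continuous_const.add continuous_id).continuousAt
      exact hcont2.preimage_mem_nhds
        (by simpa using Ioo_mem_nhds hspos (show s < D/2 by rw [hsdef]; linarith))
    have hgd : ∀ᶠ t in nhds (0:ℝ),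
        HasDerivAt (fun t' : ℝ => F (y₀ + t' • e) - F (x₀ + t' • (-e)) + 2 * ψ (s + t'))
        (fderiv ℝ F (y₀ + t • e) e - fderiv ℝ F (x₀ + t • (-e)) (-e) + 2 * ψ' (s + t)) t := by
      filter_upwards [hy1, hx1, hsev] with t h1 h2 h3
      have hlin : HasDerivAt (fun t' : ℝ => s + t') 1 t := by
        simpa using (hasDerivAt_id t).const_add s
      have h4 : HasDerivAt (fun t' : ℝ => ψ (s + t')) (ψ' (s + t)) t := by
        have h5 : HasDerivAt ψ (ψ' (s + t)) ((fun t' : ℝ => s + t') t) := hψat _ h3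
        have := h5.comp t hlin
        simpa [Function.comp_def] using this
      exact (h1.sub h2).add (h4.const_mul 2)
    have hg'd : HasDerivAt
        (fun t : ℝ => fderiv ℝ F (y₀ + t • e) e - fderiv ℝ F (x₀ + t • (-e)) (-e) + 2 * ψ' (s + t))
        (Q e + 2 * ψ'' s) 0 := by
      have hlin : HasDerivAt (fun t' : ℝ => s + t') 1 0 := by
        simpa using (hasDerivAt_id (0:ℝ)).const_add s
      have hψ'c : HasDerivAt (fun t : ℝ => ψ' (s + t)) (ψ'' s) 0 := by
        have h5 : HasDerivAt ψ' (ψ'' s) ((fun t' : ℝ => s + t') 0) := by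
          simpa using hψ'at
        have := h5.comp 0 hlin
        simpa [Function.comp_def] using this
      have h6 := (hy2.sub hx2).add (hψ'c.const_mul 2)
      have h7 : fderiv ℝ (fderiv ℝ F) x₀ (-e) (-e) = fderiv ℝ (fderiv ℝ F) x₀ e e := by
        rw [map_neg]
        simp [ContinuousLinearMap.neg_apply]
      rw [h7] at h6
      rw [hQdef]
      exact h6
    have := aux_second_test hgmin hgd hg'd
    linarith
  -- trace comparison
  have H4 : Q e ≤ ∑ i, Q (EuclideanSpace.single i 1) := by
    have hQB : ∀ v, Q v = ((fderiv ℝ (fderiv ℝ F) y₀ - fderiv ℝ (fderiv ℝ F) x₀) v) v := by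
      intro v
      rw [hQdef]
      simp [ContinuousLinearMap.sub_apply]
    have hT := aux_trace (fderiv ℝ (fderiv ℝ F) y₀ - fderiv ℝ (fderiv ℝ F) x₀)
      (fun v => (hQB v) ▸ H2 v) e he
    calc Q e = _ := hQB e
      _ ≤ ∑ i, ((fderiv ℝ (fderiv ℝ F) y₀ - fderiv ℝ (fderiv ℝ F) x₀) (EuclideanSpace.single i 1))
          (EuclideanSpace.single i 1) := hT
      _ = ∑ i, Q (EuclideanSpace.single i 1) := by
          apply Finset.sum_congr rfl
          intro i _
          rw [← hQB]
  -- laplacian identification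
  have H5 : ∑ i, Q (EuclideanSpace.single i 1) = lap F y₀ - lap F x₀ := by
    have hQl : ∀ z ∈ Ω, ∑ i, fderiv ℝ (fderiv ℝ F) z (EuclideanSpace.single i 1)
        (EuclideanSpace.single i 1) = lap F z := by
      intro z hz
      unfold lap
      apply Finset.sum_congr rfl
      intro i _
      have hdiff : DifferentiableAt ℝ (fderiv ℝ F) z :=
        ((hFcd.contDiffAt (hΩ.mem_nhds hz)).fderiv_right (m := 1) (le_refl 2)).differentiableAt (by norm_num)
      have h1 : fderiv ℝ (fun y => fderiv ℝ F y (EuclideanSpace.single i 1)) z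
          = (fderiv ℝ (fderiv ℝ F) z).flip (EuclideanSpace.single i 1) := by
        have h2 := fderiv_clm_apply (c := fderiv ℝ F) (u := fun _ => EuclideanSpace.single i 1)
          hdiff (differentiableAt_const _)
        rw [h2]
        simp
      rw [h1]
      simp [ContinuousLinearMap.flip_apply]
    rw [← hQl y₀ hy₀, ← hQl x₀ hx₀, ← Finset.sum_sub_distrib]
  have H6 : ∀ z ∈ Ω, lap F z = 2 * fderiv ℝ F z (X z) - (inner ℝ e (V z (X z)) : ℝ) := by
    intro z hz
    have hfk : ∀ k : Fin n, ContDiffOn ℝ 2 (fun z' => X z' k) Ω := by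
      intro k
      have h2 := (EuclideanSpace.proj (𝕜 := ℝ) k).contDiff.comp_contDiffOn hX
      exact h2.congr (fun z' _ => by simp)
    have hDfk : ∀ (k : Fin n), ∀ y ∈ Ω, ∀ u, fderiv ℝ (fun z'' => X z'' k) y u
        = fderiv ℝ X y u k := by
      intro k y hy u
      have h1 : HasFDerivAt (fun z'' => X z'' k)
          ((EuclideanSpace.proj (𝕜:=ℝ) k).comp (fderiv ℝ X y)) y := by
        have h2 := (EuclideanSpace.proj (𝕜:=ℝ) k).hasFDerivAt.comp y (hXdiff y hy).hasFDerivAt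
        apply h2.congr_of_eventuallyEq
        filter_upwards with z'
        simp
      rw [h1.fderiv]
      simp
    have hFcomp : ∀ y ∈ Ω, ∀ u, fderiv ℝ F y u
        = ∑ k, e k * fderiv ℝ (fun z'' => X z'' k) y u := by
      intro y hy u
      rw [hDF y hy u]
      have h3 : (inner ℝ e (fderiv ℝ X y u) : ℝ) = ∑ k, e k * fderiv ℝ X y u k := by
        simp [PiLp.inner_apply, mul_comm]
      rw [h3]
      apply Finset.sum_congr rfl
      intro k _
      rw [hDfk k y hy u]
    have hdiffk : ∀ (k : Fin n) (i : Fin n), DifferentiableAt ℝ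
        (fun y => fderiv ℝ (fun z'' => X z'' k) y (EuclideanSpace.single i 1)) z := by
      intro k i
      have h1 : DifferentiableAt ℝ (fderiv ℝ (fun z'' => X z'' k)) z :=
        (((hfk k).contDiffAt (hΩ.mem_nhds hz)).fderiv_right (m := 1) (le_refl 2)).differentiableAt (by norm_num)
      exact h1.clm_apply (differentiableAt_const _)
    have hlapF : lap F z = ∑ k, e k * lap (fun z'' => X z'' k) z := by
      unfold lap
      have hper : ∀ i : Fin n,
          fderiv ℝ (fun y => fderiv ℝ F y (EuclideanSpace.single i 1)) z (EuclideanSpace.single i 1)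
          = ∑ k, e k * fderiv ℝ (fun y => fderiv ℝ (fun z'' => X z'' k) y (EuclideanSpace.single i 1)) z
            (EuclideanSpace.single i 1) := by
        intro i
        have heq1 : (fun y => fderiv ℝ F y (EuclideanSpace.single i 1))
            =ᶠ[nhds z] (fun y => ∑ k, e k * fderiv ℝ (fun z'' => X z'' k) y (EuclideanSpace.single i 1)) := by
          filter_upwards [hΩ.mem_nhds hz] with y hy
          exact hFcomp y hy _
        rw [heq1.fderiv_eq]
        rw [fderiv_fun_sum (fun k _ => ((hdiffk k i).const_mul (e k)))]
        rw [ContinuousLinearMap.sum_apply]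
        apply Finset.sum_congr rfl
        intro k _
        rw [fderiv_const_mul (hdiffk k i) (e k)]
        simp [ContinuousLinearMap.smul_apply]
      rw [Finset.sum_congr rfl (fun i _ => hper i)]
      rw [Finset.sum_comm]
      apply Finset.sum_congr rfl
      intro k _
      rw [Finset.mul_sum]
    rw [hlapF]
    rw [Finset.sum_congr rfl (fun k _ => by rw [heq z hz k])]
    have hVinner : (inner ℝ e (V z (X z)) : ℝ) = ∑ k, e k * V z (X z) k := by
      simp [PiLp.inner_apply, mul_comm]
    have hFX : fderiv ℝ F z (X z) = ∑ j, X z j * fderiv ℝ F z (EuclideanSpace.single j 1) := by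
      conv_lhs => rw [aux_decomp (X z)]
      rw [map_sum]
      apply Finset.sum_congr rfl
      intro j _
      rw [_root_.map_smul]
      simp
    have hFXj : fderiv ℝ F z (X z) = ∑ j, X z j *
        (∑ k, e k * fderiv ℝ (fun z'' => X z'' k) z (EuclideanSpace.single j 1)) := by
      rw [hFX]
      apply Finset.sum_congr rfl
      intro j _
      rw [hFcomp z hz (EuclideanSpace.single j 1)]
    rw [hVinner, hFXj]
    have hmain : ∑ k, e k * (2 * (∑ j, X z j * fderiv ℝ (fun z'' => X z'' k) z (EuclideanSpace.single j 1)))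
        = 2 * ∑ j, X z j * (∑ k, e k * fderiv ℝ (fun z'' => X z'' k) z (EuclideanSpace.single j 1)) := by
      simp only [Finset.mul_sum]
      rw [Finset.sum_comm]
      apply Finset.sum_congr rfl
      intro j _
      apply Finset.sum_congr rfl
      intro k _
      ring
    calc ∑ k, e k * (2 * (∑ j, X z j * fderiv ℝ (fun z'' => X z'' k) z (EuclideanSpace.single j 1))
          - V z (X z) k)
        = (∑ k, e k * (2 * (∑ j, X z j * fderiv ℝ (fun z'' => X z'' k) z (EuclideanSpace.single j 1))))
          - ∑ k, e k * V z (X z) k := by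
          rw [← Finset.sum_sub_distrib]
          apply Finset.sum_congr rfl
          intro k _
          ring
      _ = _ := by rw [hmain]
  have H7 : (0:ℝ) ≤ (inner ℝ e (V y₀ (X y₀)) : ℝ) - (inner ℝ e (V x₀ (X x₀)) : ℝ) := by
    have h1 := hVexp x₀ hx₀ y₀ hy₀
    rw [← hbdef] at h1
    have h2 : (inner ℝ e (V y₀ (X y₀)) : ℝ) - (inner ℝ e (V x₀ (X x₀)) : ℝ)
        = d⁻¹ * (inner ℝ (V y₀ (X y₀) - V x₀ (X x₀)) b : ℝ) := by
      rw [hedef, real_inner_smul_left, real_inner_smul_left, ← mul_sub]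
      congr 1
      rw [← inner_sub_right, real_inner_comm]
    rw [h2]
    exact mul_nonneg (inv_nonneg.mpr (le_of_lt hd)) h1
  
  -- the drift estimate
  set w := X y₀ - X x₀ with hwdef
  set α := (inner ℝ e w : ℝ) with hαdef
  have H8 : fderiv ℝ F y₀ w = α^2/d - ‖w‖^2/d - ψ' s * α := by
    have hrnorm : ∀ t : ℝ, Real.sqrt (inner ℝ (b + t • w) (b + t • w) : ℝ) = ‖b + t • w‖ := by
      intro t
      rw [real_inner_self_eq_norm_mul_norm, Real.sqrt_mul_self (norm_nonneg _)]
    have hcurveb : ∀ t₀ : ℝ, HasDerivAt (fun t : ℝ => b + t • w) w t₀ := fun t₀ => by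
      simpa using ((hasDerivAt_id t₀).smul_const w).const_add b
    have hr0' : Real.sqrt (inner ℝ b b : ℝ) = d := by
      rw [real_inner_self_eq_norm_mul_norm, ← hddef, Real.sqrt_mul_self (le_of_lt hd)]
    have hr0 : Real.sqrt (inner ℝ (b + (0:ℝ) • w) (b + (0:ℝ) • w) : ℝ) = d := by
      simpa using hr0'
    have hQd : HasDerivAt (fun t : ℝ => (inner ℝ (b + t • w) (b + t • w) : ℝ))
        ((inner ℝ b w : ℝ) + (inner ℝ w b : ℝ)) 0 := by
      have h1 := (hcurveb 0).inner ℝ (hcurveb 0)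
      simpa using h1
    have hbb : (inner ℝ b b : ℝ) ≠ 0 := by
      rw [real_inner_self_eq_norm_mul_norm, ← hddef]
      exact ne_of_gt (mul_pos hd hd)
    have hrd : HasDerivAt (fun t : ℝ => Real.sqrt (inner ℝ (b + t • w) (b + t • w) : ℝ)) α 0 := by
      have h1 : HasDerivAt Real.sqrt
          (1 / (2 * Real.sqrt ((fun t : ℝ => (inner ℝ (b + t • w) (b + t • w) : ℝ)) 0)))
          ((fun t : ℝ => (inner ℝ (b + t • w) (b + t • w) : ℝ)) 0) := by
        apply Real.hasDerivAt_sqrt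
        simpa using hbb
      have h2 := h1.comp 0 hQd
      have e1 : (inner ℝ b w : ℝ) = d * α := by
        rw [hαdef, hbe, real_inner_smul_left]
      have e1' : (inner ℝ w b : ℝ) = d * α := by rw [real_inner_comm]; exact e1
      have h3 : (1 / (2 * Real.sqrt ((fun t : ℝ => (inner ℝ (b + t • w) (b + t • w) : ℝ)) 0)))
          * ((inner ℝ b w : ℝ) + (inner ℝ w b : ℝ)) = α := by
        show (1 / (2 * Real.sqrt ((inner ℝ (b + (0:ℝ) • w) (b + (0:ℝ) • w) : ℝ))))
          * ((inner ℝ b w : ℝ) + (inner ℝ w b : ℝ)) = α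
        rw [hr0, e1, e1']
        field_simp
        ring
      rw [h3] at h2
      exact h2
    have hXc : HasDerivAt (fun t : ℝ => X (y₀ + t • w)) (fderiv ℝ X y₀ w) 0 := by
      have hcv : HasDerivAt (fun t : ℝ => y₀ + t • w) w 0 := by
        simpa using ((hasDerivAt_id (0:ℝ)).smul_const w).const_add y₀
      have h1 : HasFDerivAt X (fderiv ℝ X y₀) (y₀ + (0:ℝ) • w) := by
        simpa using (hXdiff y₀ hy₀).hasFDerivAt
      exact h1.comp_hasDerivAt 0 hcv
    have hIder : HasDerivAt (fun t : ℝ => (inner ℝ (X (y₀ + t • w) - X x₀) (b + t • w) : ℝ))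
        ((inner ℝ (X (y₀ + (0:ℝ) • w) - X x₀) w : ℝ)
          + (inner ℝ (fderiv ℝ X y₀ w) (b + (0:ℝ) • w) : ℝ)) 0 :=
      (hXc.sub_const (X x₀)).inner ℝ (hcurveb 0)
    have hrne : Real.sqrt (inner ℝ (b + (0:ℝ) • w) (b + (0:ℝ) • w) : ℝ) ≠ 0 := by
      rw [hr0]; exact ne_of_gt hd
    have hinv : HasDerivAt (fun t : ℝ => (Real.sqrt (inner ℝ (b + t • w) (b + t • w) : ℝ))⁻¹)
        (-α / d^2) 0 := by
      have h1 := hrd.inv hrne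
      have h2 : -α / Real.sqrt (inner ℝ (b + (0:ℝ) • w) (b + (0:ℝ) • w) : ℝ) ^ 2 = -α / d^2 := by
        rw [hr0]
      rwa [h2] at h1
    have hsmem : s ∈ Ioo (0:ℝ) (D/2) := ⟨hspos, by rw [hsdef]; linarith⟩
    have hψ4 : HasDerivAt (fun t : ℝ => 2 * ψ (Real.sqrt (inner ℝ (b + t • w) (b + t • w) : ℝ) / 2))
        (2 * (ψ' s * (α / 2))) 0 := by
      have hdiv : HasDerivAt (fun t : ℝ => Real.sqrt (inner ℝ (b + t • w) (b + t • w) : ℝ) / 2)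
          (α / 2) 0 := hrd.div_const 2
      have hψs : HasDerivAt ψ (ψ' s)
          ((fun t : ℝ => Real.sqrt (inner ℝ (b + t • w) (b + t • w) : ℝ) / 2) 0) := by
        show HasDerivAt ψ (ψ' s) (Real.sqrt (inner ℝ (b + (0:ℝ) • w) (b + (0:ℝ) • w) : ℝ) / 2)
        have h5 : Real.sqrt (inner ℝ (b + (0:ℝ) • w) (b + (0:ℝ) • w) : ℝ) / 2 = s := by
          rw [hr0, hsdef]
        rw [h5]
        exact hψat s hsmem
      have h7 := hψs.comp 0 hdiv
      exact h7.const_mul 2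
    have htot := (hinv.mul hIder).add hψ4
    have hcontc : ContinuousAt (fun t : ℝ => y₀ + t • w) 0 :=
      (continuous_const.add (continuous_id.smul continuous_const)).continuousAt
    have hmin0 := hmincurve (fun _ : ℝ => x₀) (fun t : ℝ => y₀ + t • w)
      continuousAt_const hcontc rfl (by simp)
    have hchev : ∀ᶠ t in nhds (0:ℝ), y₀ + t • w - x₀ ≠ 0 := by
      have hcont2 : ContinuousAt (fun t : ℝ => y₀ + t • w - x₀) 0 :=
        ((continuous_const.add (continuous_id.smul continuous_const)).sub continuous_const).continuousAt
      have hval : (fun t : ℝ => y₀ + t • w - x₀) 0 ≠ 0 := by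
        show y₀ + (0:ℝ) • w - x₀ ≠ 0
        simpa [← hbdef] using hb
      exact hcont2.eventually_ne hval
    have heqt : ∀ᶠ t in nhds (0:ℝ), C x₀ (y₀ + t • w)
        = (Real.sqrt (inner ℝ (b + t • w) (b + t • w) : ℝ))⁻¹
            * (inner ℝ (X (y₀ + t • w) - X x₀) (b + t • w) : ℝ)
          + 2 * ψ (Real.sqrt (inner ℝ (b + t • w) (b + t • w) : ℝ) / 2) := by
      filter_upwards [hchev] with t hne3
      have hch : y₀ + t • w - x₀ = b + t • w := by rw [hbdef]; abel
      have hne4 : x₀ ≠ y₀ + t • w := by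
        intro hcEq
        apply hne3
        rw [← hcEq, sub_self]
      rw [hC _ _ hne4]
      rw [hch, real_inner_smul_right, hrnorm t]
    have hmin4 : IsLocalMin (fun t : ℝ =>
        (Real.sqrt (inner ℝ (b + t • w) (b + t • w) : ℝ))⁻¹
          * (inner ℝ (X (y₀ + t • w) - X x₀) (b + t • w) : ℝ)
        + 2 * ψ (Real.sqrt (inner ℝ (b + t • w) (b + t • w) : ℝ) / 2)) 0 := by
      apply hcongr _ _ hmin0 heqt
      have h1 := hC x₀ y₀ hne
      rw [← hbdef, ← hddef] at h1
      simp only [zero_smul, add_zero]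
      rw [h1, hr0', real_inner_smul_right]
    have heq0 := hmin4.hasDerivAt_eq_zero htot
    simp only [zero_smul, add_zero] at heq0
    rw [hr0'] at heq0
    rw [← hwdef] at heq0
    have e1 : (inner ℝ w b : ℝ) = d * α := by
      rw [hbe, real_inner_smul_right, hαdef, real_inner_comm]
    have e2 : (inner ℝ w w : ℝ) = ‖w‖^2 := by
      rw [real_inner_self_eq_norm_mul_norm]; ring
    have e3 : (inner ℝ (fderiv ℝ X y₀ w) b : ℝ) = d * fderiv ℝ F y₀ w := by
      rw [hDF y₀ hy₀ w, hbe, real_inner_smul_right, real_inner_comm]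
    rw [e1, e2, e3] at heq0
    have hdne : d ≠ 0 := ne_of_gt hd
    field_simp at heq0
    have hfac : d^2 * (‖w‖^2 + d * fderiv ℝ F y₀ w - α^2 + ψ' s * α * d) = 0 := by
      linear_combination d^2 * heq0
    have h9 : ‖w‖^2 + d * fderiv ℝ F y₀ w - α^2 + ψ' s * α * d = 0 := by
      rcases mul_eq_zero.mp hfac with h | h
      · exact absurd h (pow_ne_zero 2 hdne)
      · exact h
    field_simp
    linarith [h9]
  have H9 : α = C x₀ y₀ - 2 * ψ s := by
    have h1 := hC x₀ y₀ hne
    rw [← hbdef, ← hddef, ← hedef, ← hsdef] at h1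
    have h2 : (inner ℝ (X y₀ - X x₀) e : ℝ) = α := by
      rw [hαdef, hwdef, real_inner_comm]
    rw [h1, h2]
    ring
  have H10 : α^2 ≤ ‖w‖^2 := by
    have h1 : |(inner ℝ e w : ℝ)| ≤ ‖e‖ * ‖w‖ := abs_real_inner_le_norm e w
    rw [he, one_mul] at h1
    rw [hαdef]
    calc (inner ℝ e w : ℝ)^2 = |(inner ℝ e w : ℝ)|^2 := (sq_abs _).symm
      _ ≤ ‖w‖^2 := by nlinarith [abs_nonneg (inner ℝ e w : ℝ), norm_nonneg w]
  -- assembly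
  have hsum : lap F y₀ - lap F x₀ = 2 * fderiv ℝ F y₀ w -
      ((inner ℝ e (V y₀ (X y₀)) : ℝ) - (inner ℝ e (V x₀ (X x₀)) : ℝ)) := by
    rw [H6 y₀ hy₀, H6 x₀ hx₀]
    have hmsub : fderiv ℝ F y₀ (X y₀) - fderiv ℝ F y₀ (X x₀) = fderiv ℝ F y₀ w := by
      rw [hwdef, map_sub]
    rw [← H1 (X x₀)]
    ring_nf
    ring_nf at hmsub
    linarith [hmsub]
  have hkey : ψ' s * α ≤ ψ'' s := by
    have h1 : -(2 * ψ'' s) ≤ 2 * fderiv ℝ F y₀ w -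
        ((inner ℝ e (V y₀ (X y₀)) : ℝ) - (inner ℝ e (V x₀ (X x₀)) : ℝ)) := by
      rw [← hsum, ← H5]; linarith [H3, H4]
    have h2 : fderiv ℝ F y₀ w ≤ -(ψ' s * α) := by
      rw [H8]
      have h3 : α ^ 2 / d ≤ ‖w‖ ^ 2 / d := by gcongr
      linarith
    linarith [H7]
  have hODEs := hODE s hsI
  have hψnegs := hψneg s hsI
  have hfinal : ψ' s * (C x₀ y₀) ≤ 0 := by
    have : ψ' s * α ≤ -2 * ψ' s * ψ s := le_trans hkey hODEs
    have h2 : ψ' s * (α + 2 * ψ s) ≤ 0 := by ring_nf; ring_nf at this; linarith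
    have h3 : α + 2 * ψ s = C x₀ y₀ := by rw [H9]; ring
    rwa [h3] at h2
  have : 0 < ψ' s * (C x₀ y₀) := mul_pos_of_neg_of_neg hψnegs hCneg
  linarith
end

section
/- Let Ω ⊂ ℝⁿ be a bounded domain with diameter D. Let X be a C² vector field on Ω satisfying ΔX = 2∇_X X − V(x, X(x)) in Ω, where V : Ω × ℝⁿ → ℝⁿ is C¹ and the composite vector field x ↦ V(x, X(x)) has ω : [0, ∞) → ℝ as a modulus of expansion, i.e. (V(y, X(y)) − V(x, X(x))) · (y − x)/|y − x| ≥ 2ω(|y − x|/2) for all x ≠ y in Ω. Let ψ : [0, D/2) → ℝ be C² with ψ(0) = 0, ψ'(s) < 0 for all s, and ψ'' ≤ −2ψψ' + ω. Define C(x, y) = (X(y) − X(x)) · (y − x)/|y − x| + 2ψ(|y − x|/2) for x ≠ y in Ω and C(x, x) = 0. Then there is no (x₀, y₀) ∈ Ω × Ω with C(x₀, y₀) < 0 at which C attains a local minimum over Ω × Ω. -/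
open scoped RealInnerProductSpace
open Set MeasureTheory Filter Topology

section Aux

/-- Second derivative test at a local minimum. -/
theorem sd_test {g g' : ℝ → ℝ} {m : ℝ} (hmin : IsLocalMin g 0)
    (hg' : ∀ᶠ t in 𝓝 (0:ℝ), HasDerivAt g (g' t) t) (h2 : HasDerivAt g' m 0) : 0 ≤ m := by
  by_contra hneg
  push_neg at hneg
  have hg'0 : g' 0 = 0 := hmin.hasDerivAt_eq_zero hg'.self_of_nhds
  have hslope : Tendsto (slope g' 0) (𝓝[≠] 0) (𝓝 m) := hasDerivAt_iff_tendsto_slope.1 h2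
  have hev : ∀ᶠ t in 𝓝[≠] (0:ℝ), slope g' 0 t < 0 :=
    hslope.eventually (eventually_lt_nhds hneg)
  -- get δ's
  obtain ⟨δ₁, hδ₁, h₁⟩ := Metric.eventually_nhds_iff.1 hg'
  obtain ⟨δ₃, hδ₃, h₃⟩ := Metric.eventually_nhds_iff.1 hmin
  obtain ⟨δ₂, hδ₂, h₂'⟩ := Metric.mem_nhdsWithin_iff.1 hev
  set δ : ℝ := min δ₁ (min δ₂ δ₃) / 2 with hδdef
  have hδpos : 0 < δ := by positivity
  have hδ1 : δ < δ₁ := by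
    have := min_le_left δ₁ (min δ₂ δ₃); simp only [hδdef]; linarith
  have hδ2 : δ < δ₂ := by
    have h := min_le_right δ₁ (min δ₂ δ₃); have := min_le_left δ₂ δ₃
    simp only [hδdef]; linarith
  have hδ3 : δ < δ₃ := by
    have h := min_le_right δ₁ (min δ₂ δ₃); have := min_le_right δ₂ δ₃
    simp only [hδdef]; linarith
  have key : g δ < g 0 := by
    have hanti : StrictAntiOn g (Icc 0 δ) := by
      apply strictAntiOn_of_deriv_neg (convex_Icc 0 δ)
      · intro t ht
        have ht' : dist t 0 < δ₁ := by
          rw [Real.dist_eq, sub_zero, abs_of_nonneg ht.1]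
          exact lt_of_le_of_lt ht.2 hδ1
        exact ((h₁ ht').differentiableAt.continuousAt).continuousWithinAt
      · intro t ht
        rw [interior_Icc] at ht
        have ht1 : dist t 0 < δ₁ := by
          rw [Real.dist_eq, sub_zero, abs_of_pos ht.1]; linarith [ht.2]
        have ht2 : dist t 0 < δ₂ := by
          rw [Real.dist_eq, sub_zero, abs_of_pos ht.1]; linarith [ht.2]
        have hs := h₂' ⟨Metric.mem_ball.2 ht2, by simpa using ne_of_gt ht.1⟩
        simp only [Set.mem_setOf_eq] at hs
        rw [slope_def_field, hg'0, sub_zero, sub_zero, div_lt_iff₀ ht.1, zero_mul] at hs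
        rw [(h₁ ht1).deriv]
        exact hs
    exact hanti (by constructor <;> [rfl; exact le_of_lt hδpos] ) (by constructor <;> [exact le_of_lt hδpos; rfl]) hδpos
  have : g 0 ≤ g δ := h₃ (by rw [Real.dist_eq, sub_zero, abs_of_pos hδpos]; exact hδ3)
  linarith

/-- Trace of a bilinear form is orthonormal-basis independent. -/
theorem trace_indep {F : Type*} [NormedAddCommGroup F] [InnerProductSpace ℝ F]
    [FiniteDimensional ℝ F] {ι κ : Type*} [Fintype ι] [Fintype κ]
    (b : OrthonormalBasis ι ℝ F) (c : OrthonormalBasis κ ℝ F)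
    (B : F →L[ℝ] F →L[ℝ] ℝ) : ∑ i, B (b i) (b i) = ∑ j, B (c j) (c j) := by
  have expand : ∀ i, b i = ∑ j, ⟪c j, b i⟫ • c j := by
    intro i
    have := c.sum_repr (b i)
    simp only [OrthonormalBasis.repr_apply_apply] at this
    exact this.symm
  calc ∑ i, B (b i) (b i)
      = ∑ i, ∑ j, ∑ l, (⟪c j, b i⟫ * ⟪c l, b i⟫) * B (c l) (c j) := by
        refine Finset.sum_congr rfl fun i _ => ?_
        conv_lhs => rw [expand i]
        simp only [map_sum, _root_.map_smul, ContinuousLinearMap.sum_apply,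
          ContinuousLinearMap.smul_apply, smul_eq_mul, Finset.mul_sum]
        refine Finset.sum_congr rfl fun j _ => Finset.sum_congr rfl fun l _ => ?_
        ring
    _ = ∑ j, ∑ l, (∑ i, ⟪c j, b i⟫ * ⟪b i, c l⟫) * B (c l) (c j) := by
        rw [Finset.sum_comm]
        refine Finset.sum_congr rfl fun j _ => ?_
        rw [Finset.sum_comm]
        refine Finset.sum_congr rfl fun l _ => ?_
        rw [Finset.sum_mul]
        refine Finset.sum_congr rfl fun i _ => ?_
        rw [real_inner_comm (c l) (b i)]
    _ = ∑ j, ∑ l, ⟪c j, c l⟫ * B (c l) (c j) := by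
        refine Finset.sum_congr rfl fun j _ => Finset.sum_congr rfl fun l _ => ?_
        rw [b.sum_inner_mul_inner]
    _ = ∑ j, B (c j) (c j) := by
        refine Finset.sum_congr rfl fun j _ => ?_
        rw [Finset.sum_eq_single j]
        · rw [real_inner_self_eq_norm_sq, c.orthonormal.1 j]; simp
        · intro l _ hl
          rw [c.orthonormal.2 (Ne.symm hl)]; simp
        · simp


variable {n : ℕ}

local notation "E" => EuclideanSpace ℝ (Fin n)

theorem line_hasDerivAt_path (z v : E) (t₀ : ℝ) :
    HasDerivAt (fun t : ℝ => z + t • v) v t₀ := by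
  simpa using ((hasDerivAt_id t₀).smul_const v).const_add z

theorem line_hasDerivAt {f : E → ℝ} {z v : E} {t₀ : ℝ}
    (hf : DifferentiableAt ℝ f (z + t₀ • v)) :
    HasDerivAt (fun t => f (z + t • v)) (fderiv ℝ f (z + t₀ • v) v) t₀ :=
  hf.hasFDerivAt.comp_hasDerivAt t₀ (line_hasDerivAt_path z v t₀)

theorem line_hasDerivAt2 {f : E → ℝ} {z v : E} (u : E) {t₀ : ℝ}
    (hd : DifferentiableAt ℝ (fderiv ℝ f) (z + t₀ • v)) :
    HasDerivAt (fun t => fderiv ℝ f (z + t • v) u)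
      (fderiv ℝ (fderiv ℝ f) (z + t₀ • v) v u) t₀ := by
  have h1 : HasFDerivAt (fun y => fderiv ℝ f y u)
      ((ContinuousLinearMap.apply ℝ ℝ u).comp (fderiv ℝ (fderiv ℝ f) (z + t₀ • v)))
      (z + t₀ • v) :=
    (ContinuousLinearMap.apply ℝ ℝ u).hasFDerivAt.comp _ hd.hasFDerivAt
  exact h1.comp_hasDerivAt t₀ (line_hasDerivAt_path z v t₀)

theorem fderiv_fderiv_apply {f : E → ℝ} {x : E} (u w : E)
    (hd : DifferentiableAt ℝ (fderiv ℝ f) x) :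
    fderiv ℝ (fun y => fderiv ℝ f y u) x w = fderiv ℝ (fderiv ℝ f) x w u := by
  have h1 : HasFDerivAt (fun y => fderiv ℝ f y u)
      ((ContinuousLinearMap.apply ℝ ℝ u).comp (fderiv ℝ (fderiv ℝ f) x)) x :=
    (ContinuousLinearMap.apply ℝ ℝ u).hasFDerivAt.comp _ hd.hasFDerivAt
  rw [h1.fderiv]; rfl


end Aux

set_option maxHeartbeats 2000000 in
theorem stmt_1 {n : ℕ} (Ω : Set (EuclideanSpace ℝ (Fin n)))
    (hΩ : IsOpen Ω) (hconn : IsConnected Ω) (hbd : Bornology.IsBounded Ω)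
    (D : ℝ) (hD : Metric.diam Ω = D) (ω : ℝ → ℝ)
    (X : EuclideanSpace ℝ (Fin n) → EuclideanSpace ℝ (Fin n))
    (V : EuclideanSpace ℝ (Fin n) → EuclideanSpace ℝ (Fin n) → EuclideanSpace ℝ (Fin n))
    (hX : ContDiffOn ℝ 2 X Ω)
    (hV : ContDiffOn ℝ 1 (fun p : EuclideanSpace ℝ (Fin n) × EuclideanSpace ℝ (Fin n) => V p.1 p.2) (Ω ×ˢ univ))
    (heq : ∀ x ∈ Ω, ∀ k : Fin n, lap (fun y => X y k) x =
      2 * ∑ j, X x j * fderiv ℝ (fun y => X y k) x (EuclideanSpace.single j 1)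
        - V x (X x) k)
    (hVexp : ∀ x ∈ Ω, ∀ y ∈ Ω, x ≠ y →
      2 * ω (‖y - x‖ / 2) ≤ ⟪V y (X y) - V x (X x), ‖y - x‖⁻¹ • (y - x)⟫)
    (ψ ψ' ψ'' : ℝ → ℝ)
    (hψ0 : ψ 0 = 0)
    (hψd1 : ∀ s ∈ Ico (0:ℝ) (D/2), HasDerivWithinAt ψ (ψ' s) (Ico (0:ℝ) (D/2)) s)
    (hψd2 : ∀ s ∈ Ico (0:ℝ) (D/2), HasDerivWithinAt ψ' (ψ'' s) (Ico (0:ℝ) (D/2)) s)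
    (hψc : ContinuousOn ψ'' (Ico (0:ℝ) (D/2)))
    (hψneg : ∀ s ∈ Ico (0:ℝ) (D/2), ψ' s < 0)
    (hODE : ∀ s ∈ Ico (0:ℝ) (D/2), ψ'' s ≤ -2 * ψ s * ψ' s + ω s)
    (C : EuclideanSpace ℝ (Fin n) → EuclideanSpace ℝ (Fin n) → ℝ)
    (hCdiag : ∀ x, C x x = 0)
    (hC : ∀ x y, x ≠ y → C x y =
      ⟪X y - X x, ‖y - x‖⁻¹ • (y - x)⟫ + 2 * ψ (‖y - x‖ / 2)) :
    ¬ ∃ x₀ ∈ Ω, ∃ y₀ ∈ Ω, C x₀ y₀ < 0 ∧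
      IsLocalMinOn (fun p : EuclideanSpace ℝ (Fin n) × EuclideanSpace ℝ (Fin n) => C p.1 p.2) (Ω ×ˢ Ω) (x₀, y₀) := by
  rintro ⟨x₀, hx₀, y₀, hy₀, hC0, hmin⟩
  by_cases hxy : x₀ = y₀
  · rw [hxy, hCdiag] at hC0; exact absurd hC0 (lt_irrefl 0)
  -- basic quantities
  have hw₀ : y₀ - x₀ ≠ (0 : EuclideanSpace ℝ (Fin n)) := sub_ne_zero.2 (Ne.symm hxy)
  set d : ℝ := ‖y₀ - x₀‖ with hddef
  have hd : 0 < d := norm_pos_iff.2 hw₀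
  set ee : EuclideanSpace ℝ (Fin n) := d⁻¹ • (y₀ - x₀) with heedef
  have hee : ‖ee‖ = 1 := by
    rw [heedef, norm_smul, norm_inv, norm_norm, ← hddef, inv_mul_cancel₀ (ne_of_gt hd)]
  have hnormsq : ∀ z : EuclideanSpace ℝ (Fin n), ‖z‖^2 = ∑ k, z k ^ 2 := by
    intro z
    rw [EuclideanSpace.norm_eq, Real.sq_sqrt (by positivity)]
    exact Finset.sum_congr rfl fun k _ => by rw [Real.norm_eq_abs, sq_abs]
  have hinnersum : ∀ a b : EuclideanSpace ℝ (Fin n), (⟪a, b⟫ : ℝ) = ∑ k, a k * b k := by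
    intro a b
    simp [PiLp.inner_apply, RCLike.inner_apply, conj_trivial]
    exact Finset.sum_congr rfl fun k _ => mul_comm _ _
  have hek : ∀ k, ee k = d⁻¹ * (y₀ - x₀) k := by
    intro k; rw [heedef]; simp [PiLp.smul_apply]
  -- d < D
  have hdD : d < D := by
    obtain ⟨ε, hε, hball⟩ := Metric.isOpen_iff.1 hΩ y₀ hy₀
    have hy' : y₀ + (ε/2) • ee ∈ Ω := by
      apply hball
      rw [Metric.mem_ball, dist_eq_norm, add_sub_cancel_left, norm_smul, hee,
        Real.norm_eq_abs, abs_of_pos (by linarith), mul_one]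
      linarith
    have hle : dist x₀ (y₀ + (ε/2) • ee) ≤ D := hD ▸ Metric.dist_le_diam_of_mem hbd hx₀ hy'
    have heqn : y₀ + (ε/2) • ee - x₀ = (1 + ε/2 * d⁻¹) • (y₀ - x₀) := by
      rw [heedef, smul_smul]; module
    rw [dist_comm, dist_eq_norm, heqn, norm_smul, Real.norm_eq_abs, ← hddef,
      abs_of_pos (by positivity)] at hle
    have hx : (1 + ε / 2 * d⁻¹) * d = d + ε/2 := by field_simp
    linarith [hx ▸ hle]
  have hs : d / 2 ∈ Ioo (0:ℝ) (D/2) := ⟨by linarith, by linarith⟩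
  -- psi derivatives at interior points
  have hψat : ∀ σ ∈ Ioo (0:ℝ) (D/2), HasDerivAt ψ (ψ' σ) σ := by
    intro σ hσ
    exact (hψd1 σ (Ioo_subset_Ico_self hσ)).hasDerivAt
      (mem_nhds_iff.2 ⟨Ioo 0 (D/2), Ioo_subset_Ico_self, isOpen_Ioo, hσ⟩)
  have hψat' : ∀ σ ∈ Ioo (0:ℝ) (D/2), HasDerivAt ψ' (ψ'' σ) σ := by
    intro σ hσ
    exact (hψd2 σ (Ioo_subset_Ico_self hσ)).hasDerivAt
      (mem_nhds_iff.2 ⟨Ioo 0 (D/2), Ioo_subset_Ico_self, isOpen_Ioo, hσ⟩)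
  -- coordinate functions
  set f : Fin n → EuclideanSpace ℝ (Fin n) → ℝ := fun k z => X z k with hfdef
  have hfC : ∀ k, ContDiffOn ℝ 2 (f k) Ω := by
    intro k
    have h := (EuclideanSpace.proj (𝕜 := ℝ) k).contDiff.comp_contDiffOn hX
    exact h.congr (fun z _ => rfl)
  have hf1 : ∀ (k) (z), z ∈ Ω → DifferentiableAt ℝ (f k) z := by
    intro k z hz
    exact ((hfC k).differentiableOn (by norm_num)).differentiableAt (hΩ.mem_nhds hz)
  have hf2 : ∀ (k) (z), z ∈ Ω → DifferentiableAt ℝ (fderiv ℝ (f k)) z := by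
    intro k z hz
    have := ((hfC k).fderiv_of_isOpen (m := 1) hΩ (le_refl 2)).differentiableOn one_ne_zero
    exact this.differentiableAt (hΩ.mem_nhds hz)
  -- local min along lines
  have hlm : ∀ va vb : EuclideanSpace ℝ (Fin n), IsLocalMin (fun t : ℝ => C (x₀ + t • va) (y₀ + t • vb)) 0 := by
    intro va vb
    have h1 : IsLocalMin (fun p : EuclideanSpace ℝ (Fin n) × EuclideanSpace ℝ (Fin n) => C p.1 p.2) (x₀, y₀) :=
      hmin.isLocalMin (prod_mem_nhds (hΩ.mem_nhds hx₀) (hΩ.mem_nhds hy₀))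
    have hcont : ContinuousAt (fun t : ℝ => ((x₀ + t • va, y₀ + t • vb) :
        EuclideanSpace ℝ (Fin n) × EuclideanSpace ℝ (Fin n))) 0 := by fun_prop
    have h0 : (x₀, y₀) = (fun t : ℝ => ((x₀ + t • va, y₀ + t • vb) :
        EuclideanSpace ℝ (Fin n) × EuclideanSpace ℝ (Fin n))) 0 := by simp
    rw [h0] at h1
    exact IsLocalMin.comp_continuous (g := fun t : ℝ => ((x₀ + t • va, y₀ + t • vb) :
      EuclideanSpace ℝ (Fin n) × EuclideanSpace ℝ (Fin n))) (b := 0) h1 hcont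
  -- eventual membership
  have hev_mem : ∀ va vb : EuclideanSpace ℝ (Fin n), ∀ᶠ t : ℝ in 𝓝 0, (x₀ + t • va) ∈ Ω ∧ (y₀ + t • vb) ∈ Ω := by
    intro va vb
    have h1 : ContinuousAt (fun t : ℝ => x₀ + t • va) 0 := by fun_prop
    have h2 : ContinuousAt (fun t : ℝ => y₀ + t • vb) 0 := by fun_prop
    have m1 := h1.eventually_mem (by simpa using hΩ.mem_nhds hx₀)
    have m2 := h2.eventually_mem (by simpa using hΩ.mem_nhds hy₀)
    filter_upwards [m1, m2] with t ht1 ht2 using ⟨ht1, ht2⟩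
  set u₀ : EuclideanSpace ℝ (Fin n) := X y₀ - X x₀ with hu₀def
  set c : ℝ := ∑ k, u₀ k * ee k with hcdef
  set nsq : ℝ := ∑ k, u₀ k ^ 2 with hnsqdef
  -- C at the point
  have hC0' : c + 2 * ψ (d/2) < 0 := by
    rw [hC x₀ y₀ hxy, ← hddef, ← heedef] at hC0
    have h1 : (⟪X y₀ - X x₀, ee⟫ : ℝ) = c := by
      rw [hinnersum, hcdef, hu₀def]
    rw [h1] at hC0
    exact hC0
  have hCS : c^2 ≤ nsq := by
    have h1 : (⟪u₀, ee⟫ : ℝ) = c := by rw [hinnersum, hcdef]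
    have h2 : |(⟪u₀, ee⟫ : ℝ)| ≤ ‖u₀‖ * ‖ee‖ := abs_real_inner_le_norm u₀ ee
    rw [hee, mul_one, h1] at h2
    calc c^2 = |c|^2 := (sq_abs c).symm
    _ ≤ ‖u₀‖^2 := by nlinarith [abs_nonneg c, norm_nonneg u₀]
    _ = nsq := by rw [hnormsq, hnsqdef]
  -- type-a second variation
  have hQ : ∀ v : EuclideanSpace ℝ (Fin n), 0 ≤ ∑ k, (fderiv ℝ (fderiv ℝ (f k)) y₀ v v
      - fderiv ℝ (fderiv ℝ (f k)) x₀ v v) * ee k := by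
    intro v
    set gn : ℝ → ℝ := fun t => (∑ k, (f k (y₀ + t • v) - f k (x₀ + t • v)) * ee k)
      + 2 * ψ (d/2) with hgn
    set gn' : ℝ → ℝ := fun t => ∑ k, (fderiv ℝ (f k) (y₀ + t • v) v
      - fderiv ℝ (f k) (x₀ + t • v) v) * ee k with hgn'
    have heqv : (fun t : ℝ => C (x₀ + t • v) (y₀ + t • v)) =ᶠ[𝓝 0] gn := by
      filter_upwards [hev_mem v v] with t ht
      obtain ⟨h1, h2⟩ := ht
      have hsub : (y₀ + t • v) - (x₀ + t • v) = y₀ - x₀ := by abel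
      have hne : x₀ + t • v ≠ y₀ + t • v := by
        intro h
        exact hxy (by have := add_right_cancel h; exact this)
      rw [hC _ _ hne, hsub, ← hddef, ← heedef, hinnersum, hgn]
      simp only [hfdef, PiLp.sub_apply]
    have hgd : ∀ᶠ t : ℝ in 𝓝 0, HasDerivAt gn (gn' t) t := by
      filter_upwards [hev_mem v v] with t ht
      obtain ⟨h1, h2⟩ := ht
      rw [hgn, hgn']
      apply HasDerivAt.add_const
      apply HasDerivAt.fun_sum
      intro k _
      exact ((line_hasDerivAt (hf1 k _ h2)).sub (line_hasDerivAt (hf1 k _ h1))).mul_const (ee k)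
    have hgd2 : HasDerivAt gn' (∑ k, (fderiv ℝ (fderiv ℝ (f k)) y₀ v v
        - fderiv ℝ (fderiv ℝ (f k)) x₀ v v) * ee k) 0 := by
      rw [hgn']
      apply HasDerivAt.fun_sum
      intro k _
      have h1 := line_hasDerivAt2 (f := f k) (z := y₀) (v := v) v (t₀ := 0)
        (by simpa using hf2 k y₀ hy₀)
      have h2 := line_hasDerivAt2 (f := f k) (z := x₀) (v := v) v (t₀ := 0)
        (by simpa using hf2 k x₀ hx₀)
      simpa using (h1.sub h2).mul_const (ee k)
    exact sd_test ((hlm v v).congr heqv) hgd hgd2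
  -- type-b second variation
  have hQe : 0 ≤ (∑ k, (fderiv ℝ (fderiv ℝ (f k)) y₀ ee ee
      - fderiv ℝ (fderiv ℝ (f k)) x₀ ee ee) * ee k) + 2 * ψ'' (d/2) := by
    set gn : ℝ → ℝ := fun t => (∑ k, (f k (y₀ + t • ee) - f k (x₀ + t • (-ee))) * ee k)
      + 2 * ψ (d/2 + t) with hgn
    set gn' : ℝ → ℝ := fun t => (∑ k, (fderiv ℝ (f k) (y₀ + t • ee) ee
      - fderiv ℝ (f k) (x₀ + t • (-ee)) (-ee)) * ee k) + 2 * ψ' (d/2 + t) with hgn'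
    have hsmall : ∀ᶠ t : ℝ in 𝓝 0, t ∈ Ioo (-(d/2)) ((D-d)/2) :=
      Ioo_mem_nhds (by linarith) (by linarith)
    have hval : ∀ t : ℝ, t ∈ Ioo (-(d/2)) ((D-d)/2) → d/2 + t ∈ Ioo (0:ℝ) (D/2) := by
      intro t ht; exact ⟨by linarith [ht.1], by linarith [ht.2]⟩
    have heqv : (fun t : ℝ => C (x₀ + t • (-ee)) (y₀ + t • ee)) =ᶠ[𝓝 0] gn := by
      filter_upwards [hev_mem (-ee) ee, hsmall] with t ht hts
      obtain ⟨h1, h2⟩ := ht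
      have hpos : (0:ℝ) < 1 + 2 * t * d⁻¹ := by
        rw [show (1:ℝ) + 2*t*d⁻¹ = (d + 2*t)/d by field_simp]
        apply div_pos (by linarith [hts.1]) hd
      have hsub : (y₀ + t • ee) - (x₀ + t • (-ee)) = (1 + 2*t*d⁻¹) • (y₀ - x₀) := by
        rw [heedef]; module
      have hne : x₀ + t • (-ee) ≠ y₀ + t • ee := by
        intro h
        have : (y₀ + t • ee) - (x₀ + t • (-ee)) = 0 := by rw [h]; abel
        rw [hsub] at this
        exact hw₀ ((smul_eq_zero.1 this).resolve_left (ne_of_gt hpos))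
      have hnrm : ‖(y₀ + t • ee) - (x₀ + t • (-ee))‖ = d + 2*t := by
        rw [hsub, norm_smul, Real.norm_eq_abs, abs_of_pos hpos, ← hddef]
        field_simp
      have hunit : ‖(y₀ + t • ee) - (x₀ + t • (-ee))‖⁻¹ • ((y₀ + t • ee) - (x₀ + t • (-ee)))
          = ee := by
        rw [hnrm, hsub, smul_smul, heedef]
        congr 1
        have hd2t : d + 2*t ≠ 0 := by linarith [hts.1]
        field_simp
      rw [hC _ _ hne, hunit, hnrm, hinnersum, hgn]
      have harg : (d + 2*t)/2 = d/2 + t := by ring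
      rw [harg]
      simp only [hfdef, PiLp.sub_apply]
    have hgd : ∀ᶠ t : ℝ in 𝓝 0, HasDerivAt gn (gn' t) t := by
      filter_upwards [hev_mem (-ee) ee, hsmall] with t ht hts
      obtain ⟨h1, h2⟩ := ht
      rw [hgn, hgn']
      apply HasDerivAt.add
      · apply HasDerivAt.fun_sum
        intro k _
        exact ((line_hasDerivAt (hf1 k _ h2)).sub (line_hasDerivAt (hf1 k _ h1))).mul_const (ee k)
      · have hcomp := (hψat _ (hval t hts)).comp t ((hasDerivAt_id t).const_add (d/2))
        simpa [mul_comm] using hcomp.const_mul 2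
    have hgd2 : HasDerivAt gn' ((∑ k, (fderiv ℝ (fderiv ℝ (f k)) y₀ ee ee
        - fderiv ℝ (fderiv ℝ (f k)) x₀ ee ee) * ee k) + 2 * ψ'' (d/2)) 0 := by
      rw [hgn']
      apply HasDerivAt.add
      · apply HasDerivAt.fun_sum
        intro k _
        have h1 := line_hasDerivAt2 (f := f k) (z := y₀) (v := ee) ee (t₀ := 0)
          (by simpa using hf2 k y₀ hy₀)
        have h2 := line_hasDerivAt2 (f := f k) (z := x₀) (v := -ee) (-ee) (t₀ := 0)
          (by simpa using hf2 k x₀ hx₀)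
        have h3 := (h1.sub h2).mul_const (ee k)
        simpa [ContinuousLinearMap.map_neg, ContinuousLinearMap.neg_apply, neg_neg] using h3
      · have hcomp := (hψat' _ (by simpa using hs)).comp 0 ((hasDerivAt_id 0).const_add (d/2))
        simpa [mul_comm] using hcomp.const_mul 2
    exact sd_test ((hlm (-ee) ee).congr heqv) hgd hgd2
  -- first variation
  have hFV : (∑ k, (fderiv ℝ (f k) y₀ (X y₀) - fderiv ℝ (f k) x₀ (X x₀)) * ee k)
      + (nsq - c^2)/d + ψ' (d/2) * c = 0 := by
    set q : ℝ → ℝ := fun t => ∑ k, ((y₀ - x₀) k + t * u₀ k)^2 with hqdef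
    set N : ℝ → ℝ := fun t => Real.sqrt (q t) with hNdef
    set φ : ℝ → ℝ := fun t => (∑ k, (f k (y₀ + t • X y₀) - f k (x₀ + t • X x₀))
      * ((N t)⁻¹ * ((y₀ - x₀) k + t * u₀ k))) + 2 * ψ (N t / 2) with hφdef
    have hq0 : q 0 = d ^ 2 := by
      rw [hqdef, hddef, hnormsq]
      exact Finset.sum_congr rfl fun k _ => by ring
    have hq0ne : q 0 ≠ 0 := by rw [hq0]; positivity
    have hqd : HasDerivAt q (∑ k, 2 * ((y₀ - x₀) k) * u₀ k) 0 := by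
      rw [hqdef]
      apply HasDerivAt.fun_sum
      intro k _
      have h := (((hasDerivAt_id (0:ℝ)).mul_const (u₀ k)).const_add ((y₀ - x₀) k)).pow 2
      norm_num at h
      exact h.congr_deriv (by simp only [PiLp.sub_apply])
    have hN0 : N 0 = d := by rw [hNdef]; simp only []; rw [hq0, Real.sqrt_sq hd.le]
    have hNd : HasDerivAt N c 0 := by
      have h := (Real.hasDerivAt_sqrt hq0ne).comp 0 hqd
      have hsq : Real.sqrt (q 0) = d := by rw [hq0, Real.sqrt_sq hd.le]
      rw [hsq] at h
      refine h.congr_deriv (Eq.symm ?_)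
      rw [hcdef, Finset.mul_sum]
      refine Finset.sum_congr rfl fun k _ => ?_
      rw [hek k]
      field_simp
    have hNinv : HasDerivAt (fun t => (N t)⁻¹) (-c / d^2) 0 := by
      have h := hNd.inv (by rw [hN0]; exact ne_of_gt hd)
      rwa [hN0] at h
    have hA : ∀ k, HasDerivAt (fun t => (N t)⁻¹ * ((y₀ - x₀) k + t * u₀ k))
        (-c/d^2 * ((y₀ - x₀) k) + d⁻¹ * u₀ k) 0 := by
      intro k
      have h2 : HasDerivAt (fun t : ℝ => (y₀ - x₀) k + t * u₀ k) (u₀ k) 0 := by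
        simpa using ((hasDerivAt_id (0:ℝ)).mul_const (u₀ k)).const_add ((y₀ - x₀) k)
      have h := hNinv.mul h2
      simp only [hN0, zero_mul, add_zero] at h
      exact h
    have hB1 : ∀ k, HasDerivAt (fun t : ℝ => f k (y₀ + t • X y₀) - f k (x₀ + t • X x₀))
        (fderiv ℝ (f k) y₀ (X y₀) - fderiv ℝ (f k) x₀ (X x₀)) 0 := by
      intro k
      have h1 := line_hasDerivAt (f := f k) (z := y₀) (v := X y₀) (t₀ := 0)
        (by simpa using hf1 k y₀ hy₀)
      have h2 := line_hasDerivAt (f := f k) (z := x₀) (v := X x₀) (t₀ := 0)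
        (by simpa using hf1 k x₀ hx₀)
      simp only [zero_smul, add_zero] at h1 h2
      exact h1.sub h2
    have hψcomp : HasDerivAt (fun t => ψ (N t / 2)) (ψ' (d/2) * (c/2)) 0 := by
      have hdN := hNd.div_const 2
      have hψa : HasDerivAt ψ (ψ' (d/2)) (N 0 / 2) := by rw [hN0]; exact hψat _ hs
      exact hψa.comp 0 hdN
    have hφd : HasDerivAt φ ((∑ k, ((fderiv ℝ (f k) y₀ (X y₀) - fderiv ℝ (f k) x₀ (X x₀))
        * (d⁻¹ * ((y₀ - x₀) k)) + (f k y₀ - f k x₀) * (-c/d^2 * ((y₀ - x₀) k) + d⁻¹ * u₀ k)))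
        + 2 * (ψ' (d/2) * (c/2))) 0 := by
      rw [hφdef]
      apply HasDerivAt.add
      · apply HasDerivAt.fun_sum
        intro k _
        have h := (hB1 k).mul (hA k)
        simp only [hN0, zero_smul, add_zero, zero_mul] at h
        exact h
      · exact hψcomp.const_mul 2
    -- eventual equality with C along the path
    have hcz : ContinuousAt (fun t : ℝ => (y₀ + t • X y₀) - (x₀ + t • X x₀)) 0 := by fun_prop
    have hs' : ({(0 : EuclideanSpace ℝ (Fin n))}ᶜ : Set _)
        ∈ 𝓝 ((fun t : ℝ => (y₀ + t • X y₀) - (x₀ + t • X x₀)) 0) := by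
      simp only [zero_smul, add_zero]
      exact isOpen_compl_singleton.mem_nhds (by simpa using hw₀)
    have hne_ev := hcz.eventually_mem hs'
    have heqφ : (fun t : ℝ => C (x₀ + t • X x₀) (y₀ + t • X y₀)) =ᶠ[𝓝 0] φ := by
      filter_upwards [hev_mem (X x₀) (X y₀), hne_ev] with t ht hne0
      obtain ⟨h1, h2⟩ := ht
      have hne0' : (y₀ + t • X y₀) - (x₀ + t • X x₀) ≠ 0 := hne0
      have hne : x₀ + t • X x₀ ≠ y₀ + t • X y₀ := by
        intro h
        exact hne0' (by rw [h]; abel)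
      have hzk : ∀ k, ((y₀ + t • X y₀) - (x₀ + t • X x₀)) k = (y₀ - x₀) k + t * u₀ k := by
        intro k
        simp only [PiLp.sub_apply, PiLp.add_apply, PiLp.smul_apply, smul_eq_mul, hu₀def]
        ring
      have hnrm : ‖(y₀ + t • X y₀) - (x₀ + t • X x₀)‖ = N t := by
        rw [EuclideanSpace.norm_eq, hNdef]
        simp only []
        congr 1
        rw [hqdef]
        refine Finset.sum_congr rfl fun k _ => ?_
        rw [Real.norm_eq_abs, sq_abs, hzk k]
      rw [hC _ _ hne, hinnersum, hnrm, hφdef]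
      congr 1
      refine Finset.sum_congr rfl fun k _ => ?_
      rw [PiLp.smul_apply, hzk k]
      simp only [hfdef, PiLp.sub_apply, smul_eq_mul]
    have hval := IsLocalMin.hasDerivAt_eq_zero ((hlm (X x₀) (X y₀)).congr heqφ) hφd
    -- algebraic rearrangement
    have hfk : ∀ k, f k y₀ - f k x₀ = u₀ k := by
      intro k
      rw [hu₀def]
      simp [hfdef, PiLp.sub_apply]
    have hS : ∑ k, u₀ k * (y₀ - x₀) k = d * c := by
      rw [hcdef, Finset.mul_sum]
      refine Finset.sum_congr rfl fun k _ => ?_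
      rw [hek k]
      field_simp
    have h1 : ∑ k, ((fderiv ℝ (f k) y₀ (X y₀) - fderiv ℝ (f k) x₀ (X x₀))
        * (d⁻¹ * ((y₀ - x₀) k)) + (f k y₀ - f k x₀) * (-c/d^2 * ((y₀ - x₀) k) + d⁻¹ * u₀ k))
        = (∑ k, (fderiv ℝ (f k) y₀ (X y₀) - fderiv ℝ (f k) x₀ (X x₀)) * ee k)
          + (nsq - c^2)/d := by
      have ha : ∑ k, (fderiv ℝ (f k) y₀ (X y₀) - fderiv ℝ (f k) x₀ (X x₀))
          * (d⁻¹ * ((y₀ - x₀) k))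
          = ∑ k, (fderiv ℝ (f k) y₀ (X y₀) - fderiv ℝ (f k) x₀ (X x₀)) * ee k := by
        refine Finset.sum_congr rfl fun k _ => ?_
        rw [hek k]
      have hb : ∑ k, (f k y₀ - f k x₀) * (-c/d^2 * ((y₀ - x₀) k) + d⁻¹ * u₀ k)
          = -c/d^2 * (∑ k, u₀ k * (y₀ - x₀) k) + d⁻¹ * nsq := by
        rw [Finset.mul_sum, hnsqdef, Finset.mul_sum, ← Finset.sum_add_distrib]
        refine Finset.sum_congr rfl fun k _ => ?_
        rw [hfk k]
        ring
      rw [Finset.sum_add_distrib, ha, hb, hS]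
      field_simp
      ring
    have h2 : 2 * (ψ' (d/2) * (c/2)) = ψ' (d/2) * c := by ring
    rw [h1, h2] at hval
    linarith [hval]
  -- trace comparison
  have htr : -(2 * ψ'' (d/2)) ≤ ∑ k, (lap (f k) y₀ - lap (f k) x₀) * ee k := by
    classical
    set B : EuclideanSpace ℝ (Fin n) →L[ℝ] EuclideanSpace ℝ (Fin n) →L[ℝ] ℝ :=
      ∑ k, ee k • (fderiv ℝ (fderiv ℝ (f k)) y₀ - fderiv ℝ (fderiv ℝ (f k)) x₀) with hBdef
    have hBapp : ∀ v u : EuclideanSpace ℝ (Fin n), B v u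
        = ∑ k, (fderiv ℝ (fderiv ℝ (f k)) y₀ v u - fderiv ℝ (fderiv ℝ (f k)) x₀ v u) * ee k := by
      intro v u
      rw [hBdef]
      simp only [ContinuousLinearMap.coe_sum', Finset.sum_apply,
        ContinuousLinearMap.coe_smul', Pi.smul_apply, ContinuousLinearMap.sub_apply,
        ContinuousLinearMap.coe_sub', Pi.sub_apply, ContinuousLinearMap.smul_apply,
        smul_eq_mul]
      exact Finset.sum_congr rfl fun k _ => by ring
    have hon : Orthonormal ℝ ((↑) : ({ee} : Set (EuclideanSpace ℝ (Fin n))) → EuclideanSpace ℝ (Fin n)) := by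
      constructor
      · rintro ⟨i, hi⟩
        simp only [mem_singleton_iff] at hi
        simpa [hi] using hee
      · rintro ⟨i, hi⟩ ⟨j, hj⟩ hij
        simp only [mem_singleton_iff] at hi hj
        exact absurd (Subtype.ext (hi.trans hj.symm)) hij
    obtain ⟨u, b, hu, hb⟩ := hon.exists_orthonormalBasis_extension
    have heu : ee ∈ u := Finset.mem_coe.1 (hu rfl)
    have htrace := trace_indep b (EuclideanSpace.basisFun (Fin n) ℝ) B
    have hlap : ∀ (k) (z), z ∈ Ω → lap (f k) z = ∑ i, fderiv ℝ (fderiv ℝ (f k)) z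
        (EuclideanSpace.single i 1) (EuclideanSpace.single i 1) := by
      intro k z hz
      exact Finset.sum_congr rfl fun i _ =>
        fderiv_fderiv_apply _ _ (hf2 k z hz)
    have hsingles : ∑ i, B (EuclideanSpace.single i (1:ℝ)) (EuclideanSpace.single i 1)
        = ∑ k, (lap (f k) y₀ - lap (f k) x₀) * ee k := by
      calc ∑ i, B (EuclideanSpace.single i (1:ℝ)) (EuclideanSpace.single i 1)
          = ∑ i, ∑ k, (fderiv ℝ (fderiv ℝ (f k)) y₀ (EuclideanSpace.single i 1)
              (EuclideanSpace.single i 1) - fderiv ℝ (fderiv ℝ (f k)) x₀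
              (EuclideanSpace.single i 1) (EuclideanSpace.single i 1)) * ee k :=
            Finset.sum_congr rfl fun i _ => hBapp _ _
        _ = ∑ k, (∑ i, (fderiv ℝ (fderiv ℝ (f k)) y₀ (EuclideanSpace.single i 1)
              (EuclideanSpace.single i 1) - fderiv ℝ (fderiv ℝ (f k)) x₀
              (EuclideanSpace.single i 1) (EuclideanSpace.single i 1))) * ee k := by
            rw [Finset.sum_comm]
            exact Finset.sum_congr rfl fun k _ => by rw [Finset.sum_mul]
        _ = ∑ k, (lap (f k) y₀ - lap (f k) x₀) * ee k := by
            refine Finset.sum_congr rfl fun k _ => ?_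
            rw [hlap k y₀ hy₀, hlap k x₀ hx₀, Finset.sum_sub_distrib]
    have hbasisfun : ∑ j, B ((EuclideanSpace.basisFun (Fin n) ℝ) j)
        ((EuclideanSpace.basisFun (Fin n) ℝ) j)
        = ∑ i, B (EuclideanSpace.single i (1:ℝ)) (EuclideanSpace.single i 1) := by
      exact Finset.sum_congr rfl fun j _ => by rw [EuclideanSpace.basisFun_apply]
    have hlow : B ee ee ≤ ∑ i : u, B (b i) (b i) := by
      have hnn : ∀ i ∈ (Finset.univ : Finset u), 0 ≤ B (b i) (b i) := by
        intro i _
        rw [hBapp]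
        exact hQ (b i)
      have hsingle := Finset.single_le_sum hnn (Finset.mem_univ (⟨ee, heu⟩ : u))
      have hbee : b (⟨ee, heu⟩ : u) = ee := by rw [hb]
      rwa [hbee] at hsingle
    have hQe' : -(2 * ψ'' (d/2)) ≤ B ee ee := by
      rw [hBapp]
      linarith [hQe]
    calc -(2 * ψ'' (d/2)) ≤ B ee ee := hQe'
      _ ≤ ∑ i : u, B (b i) (b i) := hlow
      _ = ∑ i, B (EuclideanSpace.single i (1:ℝ)) (EuclideanSpace.single i 1) := by
          rw [htrace, hbasisfun]
      _ = ∑ k, (lap (f k) y₀ - lap (f k) x₀) * ee k := hsingles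
  -- PDE substitution
  have hPDE : ∑ k, (lap (f k) y₀ - lap (f k) x₀) * ee k
      = 2 * (∑ k, (fderiv ℝ (f k) y₀ (X y₀) - fderiv ℝ (f k) x₀ (X x₀)) * ee k)
        - ∑ k, (V y₀ (X y₀) k - V x₀ (X x₀) k) * ee k := by
    have hrepr : ∀ z : EuclideanSpace ℝ (Fin n),
        z = ∑ j, z j • EuclideanSpace.single j (1:ℝ) := by
      intro z
      have h := (EuclideanSpace.basisFun (Fin n) ℝ).sum_repr z
      simp only [EuclideanSpace.basisFun_apply, EuclideanSpace.basisFun_repr] at h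
      exact h.symm
    have hdrift : ∀ (k) (z), (∑ j, X z j * fderiv ℝ (f k) z (EuclideanSpace.single j 1))
        = fderiv ℝ (f k) z (X z) := by
      intro k z
      conv_rhs => rw [hrepr (X z)]
      rw [map_sum]
      exact Finset.sum_congr rfl fun j _ => by rw [_root_.map_smul]; simp [smul_eq_mul]
    rw [Finset.mul_sum, ← Finset.sum_sub_distrib]
    refine Finset.sum_congr rfl fun k _ => ?_
    have h1 : lap (f k) y₀ = 2 * ∑ j, X y₀ j * fderiv ℝ (f k) y₀ (EuclideanSpace.single j 1)
        - V y₀ (X y₀) k := heq y₀ hy₀ k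
    have h2 : lap (f k) x₀ = 2 * ∑ j, X x₀ j * fderiv ℝ (f k) x₀ (EuclideanSpace.single j 1)
        - V x₀ (X x₀) k := heq x₀ hx₀ k
    rw [h1, h2, hdrift k y₀, hdrift k x₀]
    ring
  have hVE : 2 * ω (d/2) ≤ ∑ k, (V y₀ (X y₀) k - V x₀ (X x₀) k) * ee k := by
    have h := hVexp x₀ hx₀ y₀ hy₀ hxy
    rw [← hddef, ← heedef, hinnersum] at h
    calc 2 * ω (d/2) ≤ ∑ k, (V y₀ (X y₀) - V x₀ (X x₀)) k * ee k := h
    _ = _ := Finset.sum_congr rfl fun k _ => by rw [PiLp.sub_apply]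
  -- final contradiction
  have hP' : ψ' (d/2) < 0 := hψneg _ (Ioo_subset_Ico_self hs)
  have hODE' : ψ'' (d/2) ≤ -2 * ψ (d/2) * ψ' (d/2) + ω (d/2) := hODE _ (Ioo_subset_Ico_self hs)
  have hdiv : (nsq - c^2)/d ≥ 0 := div_nonneg (by linarith) (le_of_lt hd)
  have hkey : ψ' (d/2) * (-2 * ψ (d/2)) < ψ' (d/2) * c :=
    mul_lt_mul_of_neg_left (by linarith) hP'
  rw [hPDE] at htr
  nlinarith [htr, hFV, hVE, hdiv, hkey, hODE']
end

section
/- Let Ω ⊂ ℝⁿ be a bounded domain with diameter D and let T > 0. Let X(x, t) be a time-dependent vector field on Ω × [0, T], C² in x and C¹ in t, satisfying (∂/∂t − Δ)X(x, t) = −2∇_{X(x,t)} X(x, t) + V(x, X(x, t)), where V : Ω × ℝⁿ → ℝⁿ is C¹ and for each t ∈ [0, T] the vector field x ↦ V(x, X(x, t)) has ω : [0, ∞) → ℝ as a modulus of expansion. Let ψ(s, t) be a C^{2,1} function on [0, D/2) × [0, T] with ψ(0, t) = 0 and ψ'(s, t) < 0 (prime denoting ∂/∂s), satisfying ψ_t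 − ψ'' ≥ 2ψ'ψ − ω. Define C(x, y, t) = ⟨X(y, t) − X(x, t), (y − x)/|y − x|⟩ + 2ψ(|y − x|/2, t) for x ≠ y, and C(x, x, t) = 0. Then C cannot attain a negative minimum in the parabolic interior: there is no (x₀, y₀, t₀) with x₀, y₀ ∈ Ω and t₀ ∈ (0, T] such that C(x₀, y₀, t₀) < 0 and C(x₀, y₀, t₀) ≤ C(x, y, t) for all x, y ∈ Ω and all t ∈ [0, t₀]. -/
open scoped RealInnerProductSpace
open Set MeasureTheory Filter Topology


lemma deriv_nonpos_right_endpoint {f : ℝ → ℝ} {a b m : ℝ} (hab : a < b)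
    (hd : HasDerivWithinAt f m (Icc a b) b) (hmin : ∀ t ∈ Icc a b, f b ≤ f t) : m ≤ 0 := by
  rw [hasDerivWithinAt_iff_tendsto_slope] at hd
  have hsub : Ico a b ⊆ Icc a b \ {b} := fun t ht => ⟨⟨ht.1, ht.2.le⟩, ht.2.ne⟩
  have hne : (𝓝[Icc a b \ {b}] b).NeBot := by
    refine mem_closure_iff_nhdsWithin_neBot.mp ?_
    have : b ∈ closure (Ico a b) := by
      rw [closure_Ico hab.ne]; exact ⟨hab.le, le_refl b⟩
    exact closure_mono hsub this
  refine le_of_tendsto hd ?_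
  filter_upwards [self_mem_nhdsWithin] with t ht
  have h1 : 0 ≤ f t - f b := sub_nonneg.2 (hmin t ht.1)
  have h2 : t - b < 0 := sub_neg.2 (lt_of_le_of_ne ht.1.2 (by simpa using ht.2))
  have : slope f b t = (f t - f b) / (t - b) := by rw [slope_def_field]
  rw [this]
  exact div_nonpos_of_nonneg_of_nonpos h1 h2.le

lemma second_deriv_test_min {g g' : ℝ → ℝ} {m : ℝ}
    (hg : ∀ᶠ h in 𝓝 (0:ℝ), HasDerivAt g (g' h) h)
    (hg' : HasDerivAt g' m 0) (hmin : IsLocalMin g 0) : 0 ≤ m := by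
  by_contra hm
  push_neg at hm
  have h0 : g' 0 = 0 := hmin.hasDerivAt_eq_zero hg.self_of_nhds
  have hslope : Tendsto (slope g' 0) (𝓝[≠] (0:ℝ)) (𝓝 m) :=
    hasDerivAt_iff_tendsto_slope.mp hg'
  have hev : ∀ᶠ t in 𝓝[≠] (0:ℝ), slope g' 0 t < 0 := hslope.eventually_lt_const hm
  rw [eventually_nhdsWithin_iff] at hev
  obtain ⟨δ, hδ, hball⟩ := Metric.eventually_nhds_iff.mp (hg.and (hmin.and hev))
  have key : ∀ t, 0 < t → t < δ → g' t < 0 := by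
    intro t ht0 htδ
    have hmem : dist t (0:ℝ) < δ := by rw [Real.dist_eq, sub_zero, abs_of_pos ht0]; exact htδ
    have := (hball hmem).2.2 (by simpa using ht0.ne')
    rw [slope_def_field, h0] at this
    have h2 : (g' t - 0) / (t - 0) < 0 := by simpa [div_eq_inv_mul] using this
    have := (div_neg_iff.mp h2)
    rcases this with ⟨h3, h4⟩ | ⟨h3, h4⟩
    · linarith
    · linarith
  -- g strictly decreasing on [0, δ/2]
  have hconts : ContinuousOn g (Icc 0 (δ/2)) := by
    intro t ht
    have hmem : dist t (0:ℝ) < δ := by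
      rw [Real.dist_eq, sub_zero, abs_of_nonneg ht.1]; linarith [ht.2]
    exact ((hball hmem).1.continuousAt).continuousWithinAt
  have hanti : StrictAntiOn g (Icc 0 (δ/2)) := by
    refine strictAntiOn_of_deriv_neg (convex_Icc _ _) hconts ?_
    intro t ht
    rw [interior_Icc] at ht
    have hmem : dist t (0:ℝ) < δ := by
      rw [Real.dist_eq, sub_zero, abs_of_pos ht.1]; linarith [ht.2]
    rw [(hball hmem).1.deriv]
    exact key t ht.1 (by linarith [ht.2])
  have h1 : g (δ/2) < g 0 := hanti ⟨le_refl _, by linarith⟩ ⟨by linarith, le_refl _⟩ (by linarith)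
  have h2 : g 0 ≤ g (δ/2) := by
    have hmem : dist (δ/2) (0:ℝ) < δ := by rw [Real.dist_eq, sub_zero, abs_of_pos (by linarith)]; linarith
    exact (hball hmem).2.1
  linarith


variable {n : ℕ}
local notation "E" => EuclideanSpace ℝ (Fin n)

lemma euclid_sum_single (w : E) : ∑ i, w i • (EuclideanSpace.single i (1:ℝ)) = w := by
  ext j
  have : (∑ i, w i • (EuclideanSpace.single i (1:ℝ))) j = ∑ i, (w i • (EuclideanSpace.single i (1:ℝ))) j :=
    map_sum (EuclideanSpace.proj (𝕜 := ℝ) j) _ _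
  rw [this]
  simp [EuclideanSpace.single_apply]

lemma clm_apply_eq_sum (ℓ : E →L[ℝ] ℝ) (w : E) :
    ℓ w = ∑ i, w i * ℓ (EuclideanSpace.single i 1) := by
  conv_lhs => rw [← euclid_sum_single w]
  rw [map_sum]
  simp [smul_eq_mul]

lemma inner_eq_sum (u v : E) : ⟪u, v⟫ = ∑ i, u i * v i := by
  rw [PiLp.inner_apply]
  simp [RCLike.inner_apply, mul_comm]

lemma lap_eq_sum_bilin {f : EuclideanSpace ℝ (Fin n) → ℝ} {x : E} (hf : ContDiffAt ℝ 2 f x) :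
    lap f x = ∑ i, (fderiv ℝ (fderiv ℝ f) x (EuclideanSpace.single i 1)) (EuclideanSpace.single i 1) := by
  unfold lap
  refine Finset.sum_congr rfl fun i _ => ?_
  have hdf : DifferentiableAt ℝ (fderiv ℝ f) x :=
    (hf.fderiv_right (m := 1) (by norm_num)).differentiableAt (by norm_num)
  rw [fderiv_clm_apply hdf (differentiableAt_const _)]
  simp

lemma reflect_sum (B : E →L[ℝ] E →L[ℝ] ℝ) (e : E) (he : ∑ i, e i * e i = 1) :
    ∑ i, (B (EuclideanSpace.single i 1 - (2 * e i) • e)) (EuclideanSpace.single i 1 - (2 * e i) • e)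
      = ∑ i, (B (EuclideanSpace.single i 1)) (EuclideanSpace.single i 1) := by
  have key : ∀ i, (B (EuclideanSpace.single i 1 - (2 * e i) • e)) (EuclideanSpace.single i 1 - (2 * e i) • e)
      = (B (EuclideanSpace.single i 1)) (EuclideanSpace.single i 1)
        - 2 * (e i * (B (EuclideanSpace.single i 1)) e)
        - 2 * (e i * (B e) (EuclideanSpace.single i 1))
        + (e i * e i) * (4 * (B e) e) := by
    intro i
    rw [map_sub, _root_.map_smul]
    simp only [ContinuousLinearMap.sub_apply, ContinuousLinearMap.smul_apply, map_sub, _root_.map_smul,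
      smul_eq_mul]
    ring
  have h1 : ∑ i, e i * (B (EuclideanSpace.single i 1)) e = (B e) e := by
    have := clm_apply_eq_sum (B.flip e) e
    simp only [ContinuousLinearMap.flip_apply] at this
    exact this.symm
  have h2 : ∑ i, e i * (B e) (EuclideanSpace.single i 1) = (B e) e :=
    (clm_apply_eq_sum (B e) e).symm
  simp only [key, Finset.sum_add_distrib, Finset.sum_sub_distrib, ← Finset.mul_sum,
    ← Finset.sum_mul, h1, h2, he]
  ring

set_option maxHeartbeats 1000000 in
theorem stmt_2 {n : ℕ} (Ω : Set (EuclideanSpace ℝ (Fin n)))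
    (hΩ : IsOpen Ω) (hconn : IsConnected Ω) (hbd : Bornology.IsBounded Ω)
    (D T : ℝ) (hD : Metric.diam Ω = D) (hT : 0 < T)
    (X : EuclideanSpace ℝ (Fin n) → ℝ → EuclideanSpace ℝ (Fin n))
    (V : EuclideanSpace ℝ (Fin n) → EuclideanSpace ℝ (Fin n) → EuclideanSpace ℝ (Fin n)) (ω : ℝ → ℝ)
    (hXx : ∀ t ∈ Icc (0:ℝ) T, ContDiffOn ℝ 2 (fun x => X x t) Ω)
    (hXt : ∀ x ∈ Ω, ContDiffOn ℝ 1 (X x) (Icc (0:ℝ) T))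
    (hV : ContDiffOn ℝ 1 (fun p : EuclideanSpace ℝ (Fin n) × EuclideanSpace ℝ (Fin n) => V p.1 p.2) (Ω ×ˢ univ))
    (heq : ∀ x ∈ Ω, ∀ t ∈ Icc (0:ℝ) T, ∀ k : Fin n,
      derivWithin (fun τ => X x τ k) (Icc (0:ℝ) T) t - lap (fun y => X y t k) x =
      -2 * ∑ j, X x t j * fderiv ℝ (fun y => X y t k) x (EuclideanSpace.single j 1)
        + V x (X x t) k)
    (hVexp : ∀ t ∈ Icc (0:ℝ) T, ∀ x ∈ Ω, ∀ y ∈ Ω, x ≠ y →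
      2 * ω (‖y - x‖ / 2) ≤ ⟪V y (X y t) - V x (X x t), ‖y - x‖⁻¹ • (y - x)⟫)
    (ψ ψs ψss ψt : ℝ → ℝ → ℝ)
    (hψ0 : ∀ t ∈ Icc (0:ℝ) T, ψ 0 t = 0)
    (hψds : ∀ t ∈ Icc (0:ℝ) T, ∀ s ∈ Ico (0:ℝ) (D/2),
      HasDerivWithinAt (fun σ => ψ σ t) (ψs s t) (Ico (0:ℝ) (D/2)) s)
    (hψdss : ∀ t ∈ Icc (0:ℝ) T, ∀ s ∈ Ico (0:ℝ) (D/2),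
      HasDerivWithinAt (fun σ => ψs σ t) (ψss s t) (Ico (0:ℝ) (D/2)) s)
    (hψdt : ∀ s ∈ Ico (0:ℝ) (D/2), ∀ t ∈ Icc (0:ℝ) T,
      HasDerivWithinAt (fun τ => ψ s τ) (ψt s t) (Icc (0:ℝ) T) t)
    (hψneg : ∀ s ∈ Ico (0:ℝ) (D/2), ∀ t ∈ Icc (0:ℝ) T, ψs s t < 0)
    (hODE : ∀ s ∈ Ico (0:ℝ) (D/2), ∀ t ∈ Icc (0:ℝ) T,
      ψt s t - ψss s t ≥ 2 * ψs s t * ψ s t - ω s)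
    (C : EuclideanSpace ℝ (Fin n) → EuclideanSpace ℝ (Fin n) → ℝ → ℝ)
    (hCdiag : ∀ x t, C x x t = 0)
    (hC : ∀ x y t, x ≠ y → C x y t =
      ⟪X y t - X x t, ‖y - x‖⁻¹ • (y - x)⟫ + 2 * ψ (‖y - x‖ / 2) t) :
    ¬ ∃ x₀ ∈ Ω, ∃ y₀ ∈ Ω, ∃ t₀ ∈ Ioc (0:ℝ) T, C x₀ y₀ t₀ < 0 ∧
      ∀ x ∈ Ω, ∀ y ∈ Ω, ∀ t ∈ Icc (0:ℝ) t₀, C x₀ y₀ t₀ ≤ C x y t := by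
  rintro ⟨x₀, hx₀, y₀, hy₀, t₀, ht₀, hneg, hmin⟩
  have ht₀T : t₀ ∈ Icc (0:ℝ) T := ⟨ht₀.1.le, ht₀.2⟩
  have hne : x₀ ≠ y₀ := by
    rintro rfl
    rw [hCdiag] at hneg
    exact lt_irrefl 0 hneg
  have hsub0 : y₀ - x₀ ≠ 0 := sub_ne_zero.mpr (Ne.symm hne)
  set d : ℝ := ‖y₀ - x₀‖ with hd_def
  have hd0 : 0 < d := norm_pos_iff.mpr hsub0
  set e : EuclideanSpace ℝ (Fin n) := d⁻¹ • (y₀ - x₀) with he_def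
  have hpe : y₀ - x₀ = d • e := by rw [he_def, smul_inv_smul₀ hd0.ne']
  have he1 : ‖e‖ = 1 := by
    rw [he_def, norm_smul, norm_inv, Real.norm_eq_abs, abs_of_pos hd0, ← hd_def]
    exact inv_mul_cancel₀ hd0.ne'
  have hesum : ∑ i, e i * e i = 1 := by
    have h1 : ⟪e, e⟫ = 1 := by
      rw [real_inner_self_eq_norm_mul_norm, he1]; norm_num
    rw [← inner_eq_sum, h1]
  -- d < D
  have hdD : d < D := by
    obtain ⟨ε, hε, hball⟩ := Metric.isOpen_iff.mp hΩ y₀ hy₀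
    have hy1 : y₀ + (ε/2) • e ∈ Ω := by
      apply hball
      rw [Metric.mem_ball, dist_eq_norm]
      have : y₀ + (ε/2) • e - y₀ = (ε/2) • e := by abel
      rw [this, norm_smul, Real.norm_eq_abs, abs_of_pos (by linarith), he1]
      linarith
    have hle := Metric.dist_le_diam_of_mem hbd hx₀ hy1
    rw [hD] at hle
    have hdist : dist x₀ (y₀ + (ε/2) • e) = d + ε/2 := by
      rw [dist_eq_norm]
      have h2 : x₀ - (y₀ + (ε/2) • e) = -((d + ε/2) • e) := by
        rw [add_smul, ← hpe]; abel
      rw [h2, norm_neg, norm_smul, Real.norm_eq_abs, abs_of_pos (by linarith), he1, mul_one]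
    linarith
  set s₀ : ℝ := d / 2 with hs₀_def
  have hs₀Ico : s₀ ∈ Ico (0:ℝ) (D/2) := ⟨by positivity, by linarith⟩
  have hs₀Ioo : s₀ ∈ Ioo (0:ℝ) (D/2) := ⟨by positivity, by linarith⟩
  -- upgraded ψ derivatives
  have hIcoNhds : ∀ σ : ℝ, σ ∈ Ioo (0:ℝ) (D/2) → Ico (0:ℝ) (D/2) ∈ 𝓝 σ := fun σ hσ =>
    Filter.mem_of_superset (isOpen_Ioo.mem_nhds hσ) Ioo_subset_Ico_self
  have hψAt : ∀ σ ∈ Ioo (0:ℝ) (D/2), HasDerivAt (fun σ' => ψ σ' t₀) (ψs σ t₀) σ := fun σ hσ =>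
    (hψds t₀ ht₀T σ (Ioo_subset_Ico_self hσ)).hasDerivAt (hIcoNhds σ hσ)
  have hψsAt : HasDerivAt (fun σ' => ψs σ' t₀) (ψss s₀ t₀) s₀ :=
    (hψdss t₀ ht₀T s₀ hs₀Ico).hasDerivAt (hIcoNhds s₀ hs₀Ioo)
  set W : EuclideanSpace ℝ (Fin n) := X y₀ t₀ - X x₀ t₀ with hW_def
  have hCval : C x₀ y₀ t₀ = ⟪W, e⟫ + 2 * ψ s₀ t₀ := by
    rw [hC x₀ y₀ t₀ hne, ← hd_def, ← he_def, ← hs₀_def, ← hW_def]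
  -- differentiability packaging
  have hX2 : ∀ z ∈ Ω, ContDiffAt ℝ 2 (fun w => X w t₀) z := fun z hz =>
    (hXx t₀ ht₀T).contDiffAt (hΩ.mem_nhds hz)
  have hXk2 : ∀ z ∈ Ω, ∀ k : Fin n, ContDiffAt ℝ 2 (fun w => X w t₀ k) z := fun z hz k =>
    (EuclideanSpace.proj (𝕜 := ℝ) k).contDiff.comp_contDiffAt z (hX2 z hz)
  -- key quantities
  have KT : (∑ k, (lap (fun w => X w t₀ k) y₀ - lap (fun w => X w t₀ k) x₀) * e k)
      - 2 * ((∑ k, (∑ j, X y₀ t₀ j * fderiv ℝ (fun w => X w t₀ k) y₀ (EuclideanSpace.single j 1)) * e k)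
           - (∑ k, (∑ j, X x₀ t₀ j * fderiv ℝ (fun w => X w t₀ k) x₀ (EuclideanSpace.single j 1)) * e k))
      + ((∑ k, V y₀ (X y₀ t₀) k * e k) - (∑ k, V x₀ (X x₀ t₀) k * e k))
      + 2 * ψt s₀ t₀ ≤ 0 := by
    set Yt := derivWithin (X y₀) (Icc (0:ℝ) T) t₀ with hYt_def
    set Xt' := derivWithin (X x₀) (Icc (0:ℝ) T) t₀ with hXt'_def
    have hXtY : HasDerivWithinAt (X y₀) Yt (Icc (0:ℝ) T) t₀ :=
      ((hXt y₀ hy₀).differentiableOn one_ne_zero t₀ ht₀T).hasDerivWithinAt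
    have hXtX : HasDerivWithinAt (X x₀) Xt' (Icc (0:ℝ) T) t₀ :=
      ((hXt x₀ hx₀).differentiableOn one_ne_zero t₀ ht₀T).hasDerivWithinAt
    have hkY : ∀ k : Fin n, HasDerivWithinAt (fun τ => X y₀ τ k) (Yt k) (Icc (0:ℝ) T) t₀ := fun k =>
      (EuclideanSpace.proj (𝕜 := ℝ) k).hasFDerivAt.comp_hasDerivWithinAt t₀ hXtY
    have hkX : ∀ k : Fin n, HasDerivWithinAt (fun τ => X x₀ τ k) (Xt' k) (Icc (0:ℝ) T) t₀ := fun k =>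
      (EuclideanSpace.proj (𝕜 := ℝ) k).hasFDerivAt.comp_hasDerivWithinAt t₀ hXtX
    have hM : HasDerivWithinAt (fun t => (∑ k, (X y₀ t k - X x₀ t k) * e k) + 2 * ψ s₀ t)
        ((∑ k, (Yt k - Xt' k) * e k) + 2 * ψt s₀ t₀) (Icc (0:ℝ) T) t₀ := by
      refine HasDerivWithinAt.add ?_ ?_
      · exact HasDerivWithinAt.fun_sum fun k _ => ((hkY k).sub (hkX k)).mul_const (e k)
      · exact (hψdt s₀ hs₀Ico t₀ ht₀T).const_mul 2
    have hMle : (∑ k, (Yt k - Xt' k) * e k) + 2 * ψt s₀ t₀ ≤ 0 := by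
      have hCf : ∀ τ : ℝ, C x₀ y₀ τ = (∑ k, (X y₀ τ k - X x₀ τ k) * e k) + 2 * ψ s₀ τ := by
        intro τ
        rw [hC x₀ y₀ τ hne, ← hd_def, ← he_def, ← hs₀_def, inner_eq_sum]
        congr 1
      refine deriv_nonpos_right_endpoint ht₀.1 (hM.mono (Icc_subset_Icc_right ht₀.2)) ?_
      intro t ht
      rw [← hCf, ← hCf]
      exact hmin x₀ hx₀ y₀ hy₀ t ht
    have hYtk : ∀ k : Fin n, Yt k = lap (fun w => X w t₀ k) y₀ +
        (-2 * ∑ j, X y₀ t₀ j * fderiv ℝ (fun w => X w t₀ k) y₀ (EuclideanSpace.single j 1)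
         + V y₀ (X y₀ t₀) k) := by
      intro k
      have hdw : derivWithin (fun τ => X y₀ τ k) (Icc (0:ℝ) T) t₀ = Yt k :=
        (hkY k).derivWithin (uniqueDiffOn_Icc hT t₀ ht₀T)
      have h := heq y₀ hy₀ t₀ ht₀T k
      rw [hdw] at h
      linarith
    have hXtk : ∀ k : Fin n, Xt' k = lap (fun w => X w t₀ k) x₀ +
        (-2 * ∑ j, X x₀ t₀ j * fderiv ℝ (fun w => X w t₀ k) x₀ (EuclideanSpace.single j 1)
         + V x₀ (X x₀ t₀) k) := by
      intro k
      have hdw : derivWithin (fun τ => X x₀ τ k) (Icc (0:ℝ) T) t₀ = Xt' k :=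
        (hkX k).derivWithin (uniqueDiffOn_Icc hT t₀ ht₀T)
      have h := heq x₀ hx₀ t₀ ht₀T k
      rw [hdw] at h
      linarith
    have hsum_eq : (∑ k, (Yt k - Xt' k) * e k)
        = ∑ k, ((lap (fun w => X w t₀ k) y₀ - lap (fun w => X w t₀ k) x₀) * e k
            - 2 * ((∑ j, X y₀ t₀ j * fderiv ℝ (fun w => X w t₀ k) y₀ (EuclideanSpace.single j 1)) * e k
                 - (∑ j, X x₀ t₀ j * fderiv ℝ (fun w => X w t₀ k) x₀ (EuclideanSpace.single j 1)) * e k)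
            + (V y₀ (X y₀ t₀) k * e k - V x₀ (X x₀ t₀) k * e k)) := by
      refine Finset.sum_congr rfl fun k _ => ?_
      rw [hYtk k, hXtk k]; ring
    rw [hsum_eq] at hMle
    simp only [Finset.sum_add_distrib, Finset.sum_sub_distrib, ← Finset.mul_sum] at hMle
    linarith [hMle]

  have KS2 : 0 ≤ (∑ k, (lap (fun w => X w t₀ k) y₀ - lap (fun w => X w t₀ k) x₀) * e k)
      + 2 * ψss s₀ t₀ := by
    have hmi : ∀ i : Fin n,
        0 ≤ (∑ k, ((fderiv ℝ (fderiv ℝ (fun w => X w t₀ k)) y₀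
                (EuclideanSpace.single i 1 - (2 * e i) • e))
                (EuclideanSpace.single i 1 - (2 * e i) • e)
              - (fderiv ℝ (fderiv ℝ (fun w => X w t₀ k)) x₀ (EuclideanSpace.single i 1))
                (EuclideanSpace.single i 1)) * e k)
            + 2 * ((ψss s₀ t₀ * (-(e i))) * (-(e i))) := by
      intro i
      set v : EuclideanSpace ℝ (Fin n) := EuclideanSpace.single i 1 with hv_def
      set Rv : EuclideanSpace ℝ (Fin n) := EuclideanSpace.single i 1 - (2 * e i) • e with hRv_def
      set xc : ℝ → EuclideanSpace ℝ (Fin n) := fun h => x₀ + h • v with hxc_def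
      set yc : ℝ → EuclideanSpace ℝ (Fin n) := fun h => y₀ + h • Rv with hyc_def
      set σf : ℝ → ℝ := fun h => s₀ - h * e i with hσf_def
      set gi : ℝ → ℝ := fun h => (∑ k, (X (yc h) t₀ k - X (xc h) t₀ k) * e k) + 2 * ψ (σf h) t₀
        with hgi_def
      set gi' : ℝ → ℝ := fun h => (∑ k, (fderiv ℝ (fun w => X w t₀ k) (yc h) Rv
          - fderiv ℝ (fun w => X w t₀ k) (xc h) v) * e k) + 2 * (ψs (σf h) t₀ * (-(e i)))
        with hgi'_def
      have hxc0 : xc 0 = x₀ := by simp [hxc_def]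
      have hyc0 : yc 0 = y₀ := by simp [hyc_def]
      have hσ0 : σf 0 = s₀ := by simp [hσf_def]
      have hcx : Continuous xc := continuous_const.add (continuous_id.smul continuous_const)
      have hcy : Continuous yc := continuous_const.add (continuous_id.smul continuous_const)
      have ev1 : ∀ᶠ h in 𝓝 (0:ℝ), xc h ∈ Ω :=
        (hcx.tendsto' 0 x₀ hxc0).eventually_mem (hΩ.mem_nhds hx₀)
      have ev2 : ∀ᶠ h in 𝓝 (0:ℝ), yc h ∈ Ω :=
        (hcy.tendsto' 0 y₀ hyc0).eventually_mem (hΩ.mem_nhds hy₀)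
      have ev3 : ∀ᶠ h in 𝓝 (0:ℝ), 0 < d - h * (2 * e i) := by
        have hc3 : Continuous fun h : ℝ => d - h * (2 * e i) :=
          continuous_const.sub (continuous_id.mul continuous_const)
        exact (hc3.tendsto' 0 d (by simp)).eventually (eventually_gt_nhds hd0)
      have ev4 : ∀ᶠ h in 𝓝 (0:ℝ), σf h ∈ Ioo (0:ℝ) (D/2) := by
        have hc4 : Continuous σf := by
          rw [hσf_def]
          exact continuous_const.sub (continuous_id.mul continuous_const)
        exact (hc4.tendsto' 0 s₀ hσ0).eventually (isOpen_Ioo.eventually_mem hs₀Ioo)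
      have hyx : ∀ h : ℝ, yc h - xc h = (d - h * (2 * e i)) • e := by
        intro h
        have h1 : yc h - xc h = (y₀ - x₀) - (h * (2 * e i)) • e := by
          rw [hyc_def, hxc_def, hRv_def, hv_def]
          simp only [smul_sub, smul_smul]
          abel
        rw [h1, hpe, ← sub_smul]
      have hCgi : ∀ h : ℝ, 0 < d - h * (2 * e i) → C (xc h) (yc h) t₀ = gi h := by
        intro h h3
        have hne' : xc h ≠ yc h := by
          have hsne : yc h - xc h ≠ 0 := by
            rw [hyx h]
            exact smul_ne_zero h3.ne' (by
              intro hh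
              rw [hh] at he1
              simp at he1)
          exact fun hEq => hsne (by rw [hEq]; abel)
        rw [hC _ _ t₀ hne', hyx h, norm_smul, Real.norm_eq_abs, abs_of_pos h3, he1, mul_one,
          inv_smul_smul₀ h3.ne', inner_eq_sum,
          show (d - h * (2 * e i)) / 2 = σf h by rw [hσf_def]; simp only [hs₀_def]; ring]
        rw [hgi_def]
        congr 1
      have hlocmin : IsLocalMin gi 0 := by
        filter_upwards [ev1, ev2, ev3] with h h1 h2 h3
        have h00 : gi 0 = C x₀ y₀ t₀ := by
          rw [hCval, inner_eq_sum, hgi_def]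
          simp only [hxc0, hyc0, hσ0, hW_def]
          rfl
        rw [h00, ← hCgi h h3]
        exact hmin (xc h) h1 (yc h) h2 t₀ ⟨ht₀.1.le, le_rfl⟩
      have hderiv_ev : ∀ᶠ h in 𝓝 (0:ℝ), HasDerivAt gi (gi' h) h := by
        filter_upwards [ev1, ev2, ev4] with h h1 h2 h4
        have hxcd : HasDerivAt xc v h := by
          simpa [hxc_def] using ((hasDerivAt_id h).smul_const v).const_add x₀
        have hycd : HasDerivAt yc Rv h := by
          simpa [hyc_def] using ((hasDerivAt_id h).smul_const Rv).const_add y₀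
        have hXyk : ∀ k : Fin n, HasDerivAt (fun h' => X (yc h') t₀ k)
            (fderiv ℝ (fun w => X w t₀ k) (yc h) Rv) h := fun k =>
          HasFDerivAt.comp_hasDerivAt h
            (((hXk2 (yc h) h2 k).differentiableAt (by norm_num)).hasFDerivAt) hycd
        have hXxk : ∀ k : Fin n, HasDerivAt (fun h' => X (xc h') t₀ k)
            (fderiv ℝ (fun w => X w t₀ k) (xc h) v) h := fun k =>
          HasFDerivAt.comp_hasDerivAt h
            (((hXk2 (xc h) h1 k).differentiableAt (by norm_num)).hasFDerivAt) hxcd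
        have hσd : HasDerivAt σf (-(e i)) h := by
          simpa using ((hasDerivAt_id h).mul_const (e i)).const_sub s₀
        have hψd : HasDerivAt (fun h' => ψ (σf h') t₀) (ψs (σf h) t₀ * (-(e i))) h :=
          (hψAt (σf h) h4).comp h hσd
        exact (HasDerivAt.fun_sum fun k _ => ((hXyk k).sub (hXxk k)).mul_const (e k)).add
          (hψd.const_mul 2)
      have hmd : HasDerivAt gi' ((∑ k, ((fderiv ℝ (fderiv ℝ (fun w => X w t₀ k)) y₀ Rv) Rv
            - (fderiv ℝ (fderiv ℝ (fun w => X w t₀ k)) x₀ v) v) * e k)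
          + 2 * ((ψss s₀ t₀ * (-(e i))) * (-(e i)))) 0 := by
        have hxcd : HasDerivAt xc v 0 := by
          simpa [hxc_def] using ((hasDerivAt_id (0:ℝ)).smul_const v).const_add x₀
        have hycd : HasDerivAt yc Rv 0 := by
          simpa [hyc_def] using ((hasDerivAt_id (0:ℝ)).smul_const Rv).const_add y₀
        have happY : ∀ k : Fin n, HasDerivAt (fun h => fderiv ℝ (fun w => X w t₀ k) (yc h) Rv)
            ((fderiv ℝ (fderiv ℝ (fun w => X w t₀ k)) y₀ Rv) Rv) 0 := by
          intro k
          have hdf : DifferentiableAt ℝ (fderiv ℝ (fun w => X w t₀ k)) y₀ :=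
            ((hXk2 y₀ hy₀ k).fderiv_right (m := 1) (by norm_num)).differentiableAt (by norm_num)
          have hF : HasFDerivAt (fderiv ℝ (fun w => X w t₀ k))
              (fderiv ℝ (fderiv ℝ (fun w => X w t₀ k)) y₀) (yc 0) := by
            rw [hyc0]; exact hdf.hasFDerivAt
          have hinner := hF.comp_hasDerivAt 0 hycd
          exact (ContinuousLinearMap.apply ℝ ℝ Rv).hasFDerivAt.comp_hasDerivAt 0 hinner
        have happX : ∀ k : Fin n, HasDerivAt (fun h => fderiv ℝ (fun w => X w t₀ k) (xc h) v)
            ((fderiv ℝ (fderiv ℝ (fun w => X w t₀ k)) x₀ v) v) 0 := by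
          intro k
          have hdf : DifferentiableAt ℝ (fderiv ℝ (fun w => X w t₀ k)) x₀ :=
            ((hXk2 x₀ hx₀ k).fderiv_right (m := 1) (by norm_num)).differentiableAt (by norm_num)
          have hF : HasFDerivAt (fderiv ℝ (fun w => X w t₀ k))
              (fderiv ℝ (fderiv ℝ (fun w => X w t₀ k)) x₀) (xc 0) := by
            rw [hxc0]; exact hdf.hasFDerivAt
          have hinner := hF.comp_hasDerivAt 0 hxcd
          exact (ContinuousLinearMap.apply ℝ ℝ v).hasFDerivAt.comp_hasDerivAt 0 hinner
        have hσd : HasDerivAt σf (-(e i)) 0 := by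
          simpa using ((hasDerivAt_id (0:ℝ)).mul_const (e i)).const_sub s₀
        have hψsd : HasDerivAt (fun h => ψs (σf h) t₀) (ψss s₀ t₀ * (-(e i))) 0 := by
          have h1 : HasDerivAt (fun σ' => ψs σ' t₀) (ψss s₀ t₀) (σf 0) := by
            rw [hσ0]; exact hψsAt
          exact h1.comp 0 hσd
        exact (HasDerivAt.fun_sum fun k _ => ((happY k).sub (happX k)).mul_const (e k)).add
          ((hψsd.mul_const (-(e i))).const_mul 2)
      exact second_deriv_test_min hderiv_ev hmd hlocmin
    have hsum := Finset.sum_nonneg (fun i (_ : i ∈ Finset.univ) => hmi i)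
    rw [Finset.sum_add_distrib] at hsum
    have hpsipart : ∑ i, 2 * ((ψss s₀ t₀ * (-(e i))) * (-(e i))) = 2 * ψss s₀ t₀ := by
      have h1 : ∀ i : Fin n, 2 * ((ψss s₀ t₀ * (-(e i))) * (-(e i)))
          = (e i * e i) * (2 * ψss s₀ t₀) := fun i => by ring
      rw [Finset.sum_congr rfl fun i _ => h1 i, ← Finset.sum_mul, hesum, one_mul]
    rw [hpsipart, Finset.sum_comm] at hsum
    have hmain : ∀ k : Fin n, (∑ i, ((fderiv ℝ (fderiv ℝ (fun w => X w t₀ k)) y₀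
            (EuclideanSpace.single i 1 - (2 * e i) • e))
            (EuclideanSpace.single i 1 - (2 * e i) • e)
          - (fderiv ℝ (fderiv ℝ (fun w => X w t₀ k)) x₀ (EuclideanSpace.single i 1))
            (EuclideanSpace.single i 1)) * e k)
        = (lap (fun w => X w t₀ k) y₀ - lap (fun w => X w t₀ k) x₀) * e k := by
      intro k
      rw [← Finset.sum_mul]
      congr 1
      rw [Finset.sum_sub_distrib,
        reflect_sum (fderiv ℝ (fderiv ℝ (fun w => X w t₀ k)) y₀) e hesum,
        ← lap_eq_sum_bilin (hXk2 y₀ hy₀ k), ← lap_eq_sum_bilin (hXk2 x₀ hx₀ k)]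
    rw [Finset.sum_congr rfl fun k _ => hmain k] at hsum
    exact hsum

  have KS1 : ((∑ k, (∑ j, X y₀ t₀ j * fderiv ℝ (fun w => X w t₀ k) y₀ (EuclideanSpace.single j 1)) * e k)
           - (∑ k, (∑ j, X x₀ t₀ j * fderiv ℝ (fun w => X w t₀ k) x₀ (EuclideanSpace.single j 1)) * e k))
      + d⁻¹ * (⟪W, W⟫ - ⟪W, e⟫ * ⟪W, e⟫) + ψs s₀ t₀ * ⟪W, e⟫ = 0 := by
    set xc : ℝ → EuclideanSpace ℝ (Fin n) := fun h => x₀ + h • X x₀ t₀ with hxc_def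
    set yc : ℝ → EuclideanSpace ℝ (Fin n) := fun h => y₀ + h • X y₀ t₀ with hyc_def
    set p : ℝ → EuclideanSpace ℝ (Fin n) := fun h => (y₀ - x₀) + h • W with hp_def
    have hxc0 : xc 0 = x₀ := by simp [hxc_def]
    have hyc0 : yc 0 = y₀ := by simp [hyc_def]
    have hp0 : p 0 = y₀ - x₀ := by simp [hp_def]
    have hnrm0 : ‖p 0‖ = d := by rw [hp0]
    have hpyx : ∀ h : ℝ, yc h - xc h = p h := by
      intro h
      rw [hyc_def, hxc_def, hp_def, hW_def]
      simp only [smul_sub]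
      abel
    have ev1 : ∀ᶠ h in 𝓝 (0:ℝ), xc h ∈ Ω := by
      have hcx : Continuous xc := continuous_const.add (continuous_id.smul continuous_const)
      exact (hcx.tendsto' 0 x₀ hxc0).eventually_mem (hΩ.mem_nhds hx₀)
    have ev2 : ∀ᶠ h in 𝓝 (0:ℝ), yc h ∈ Ω := by
      have hcy : Continuous yc := continuous_const.add (continuous_id.smul continuous_const)
      exact (hcy.tendsto' 0 y₀ hyc0).eventually_mem (hΩ.mem_nhds hy₀)
    have ev3 : ∀ᶠ h in 𝓝 (0:ℝ), p h ≠ 0 := by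
      have hcp : Continuous p := continuous_const.add (continuous_id.smul continuous_const)
      have := (hcp.tendsto' 0 (y₀ - x₀) hp0).eventually_mem
        (isOpen_compl_singleton.mem_nhds (by simpa using hsub0))
      filter_upwards [this] with h hh
      simpa using hh
    have hpd : HasDerivAt p W 0 := by
      rw [hp_def]
      simpa using ((hasDerivAt_id (0:ℝ)).smul_const W).const_add (y₀ - x₀)
    have hinnerpd : HasDerivAt (fun h => ⟪p h, p h⟫) (⟪p 0, W⟫ + ⟪W, p 0⟫) 0 :=
      HasDerivAt.inner ℝ hpd hpd
    have hee : ⟪e, e⟫ = 1 := by rw [real_inner_self_eq_norm_mul_norm, he1]; norm_num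
    have hip0 : ⟪p 0, p 0⟫ = d * d := by
      rw [hp0, hpe, real_inner_smul_left, real_inner_smul_right, hee]; ring
    have hipW : ⟪p 0, W⟫ + ⟪W, p 0⟫ = 2 * (d * ⟪W, e⟫) := by
      rw [hp0, hpe, real_inner_smul_left, real_inner_smul_right, real_inner_comm e W]; ring
    have hnormfn : (fun h => ‖p h‖) = fun h => Real.sqrt ⟪p h, p h⟫ := by
      funext h
      rw [real_inner_self_eq_norm_mul_norm, Real.sqrt_mul_self (norm_nonneg _)]
    have hnrm : HasDerivAt (fun h => ‖p h‖) ⟪W, e⟫ 0 := by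
      rw [hnormfn]
      have hs := (Real.hasDerivAt_sqrt (x := ⟪p 0, p 0⟫) (by rw [hip0]; positivity)).comp 0 hinnerpd
      refine hs.congr_deriv ?_
      rw [hip0, hipW, Real.sqrt_mul_self hd0.le]
      generalize ⟪W, e⟫ = c
      field_simp [hd0.ne']
      try ring
    have hninv : HasDerivAt (fun h => ‖p h‖⁻¹) (-⟪W, e⟫ / (d * d)) 0 := by
      have h1 := hnrm.inv (by rw [hnrm0]; exact hd0.ne')
      refine h1.congr_deriv ?_
      rw [hnrm0]
      ring
    have hu : HasDerivAt (fun h => ‖p h‖⁻¹ • p h)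
        (‖p 0‖⁻¹ • W + (-⟪W, e⟫ / (d * d)) • p 0) 0 := hninv.smul hpd
    have hXdy : DifferentiableAt ℝ (fun z => X z t₀) y₀ := (hX2 y₀ hy₀).differentiableAt (by norm_num)
    have hXdx : DifferentiableAt ℝ (fun z => X z t₀) x₀ := (hX2 x₀ hx₀).differentiableAt (by norm_num)
    have hycd : HasDerivAt yc (X y₀ t₀) 0 := by
      rw [hyc_def]
      simpa using ((hasDerivAt_id (0:ℝ)).smul_const (X y₀ t₀)).const_add y₀
    have hxcd : HasDerivAt xc (X x₀ t₀) 0 := by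
      rw [hxc_def]
      simpa using ((hasDerivAt_id (0:ℝ)).smul_const (X x₀ t₀)).const_add x₀
    have hAy : HasDerivAt (fun h => X (yc h) t₀)
        (fderiv ℝ (fun z => X z t₀) y₀ (X y₀ t₀)) 0 := by
      have hF : HasFDerivAt (fun z => X z t₀) (fderiv ℝ (fun z => X z t₀) y₀) (yc 0) := by
        rw [hyc0]; exact hXdy.hasFDerivAt
      exact hF.comp_hasDerivAt 0 hycd
    have hAx : HasDerivAt (fun h => X (xc h) t₀)
        (fderiv ℝ (fun z => X z t₀) x₀ (X x₀ t₀)) 0 := by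
      have hF : HasFDerivAt (fun z => X z t₀) (fderiv ℝ (fun z => X z t₀) x₀) (xc 0) := by
        rw [hxc0]; exact hXdx.hasFDerivAt
      exact hF.comp_hasDerivAt 0 hxcd
    have hA : HasDerivAt (fun h => X (yc h) t₀ - X (xc h) t₀)
        (fderiv ℝ (fun z => X z t₀) y₀ (X y₀ t₀) - fderiv ℝ (fun z => X z t₀) x₀ (X x₀ t₀)) 0 :=
      hAy.sub hAx
    have hg1 : HasDerivAt (fun h => ⟪X (yc h) t₀ - X (xc h) t₀, ‖p h‖⁻¹ • p h⟫)
        (⟪X (yc 0) t₀ - X (xc 0) t₀, ‖p 0‖⁻¹ • W + (-⟪W, e⟫ / (d * d)) • p 0⟫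
          + ⟪fderiv ℝ (fun z => X z t₀) y₀ (X y₀ t₀) - fderiv ℝ (fun z => X z t₀) x₀ (X x₀ t₀),
              ‖p 0‖⁻¹ • p 0⟫) 0 := HasDerivAt.inner ℝ hA hu
    have hsf : HasDerivAt (fun h => ‖p h‖ / 2) (⟪W, e⟫ / 2) 0 := hnrm.div_const 2
    have hψpart : HasDerivAt (fun h => ψ (‖p h‖ / 2) t₀) (ψs s₀ t₀ * (⟪W, e⟫ / 2)) 0 := by
      have h1 : HasDerivAt (fun σ' => ψ σ' t₀) (ψs s₀ t₀) (‖p 0‖ / 2) := by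
        rw [hnrm0]; exact hψAt s₀ hs₀Ioo
      exact h1.comp 0 hsf
    set g : ℝ → ℝ := fun h => ⟪X (yc h) t₀ - X (xc h) t₀, ‖p h‖⁻¹ • p h⟫ + 2 * ψ (‖p h‖ / 2) t₀
      with hg_def
    have hgd : HasDerivAt g
        ((⟪X (yc 0) t₀ - X (xc 0) t₀, ‖p 0‖⁻¹ • W + (-⟪W, e⟫ / (d * d)) • p 0⟫
          + ⟪fderiv ℝ (fun z => X z t₀) y₀ (X y₀ t₀) - fderiv ℝ (fun z => X z t₀) x₀ (X x₀ t₀),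
              ‖p 0‖⁻¹ • p 0⟫)
         + 2 * (ψs s₀ t₀ * (⟪W, e⟫ / 2))) 0 := hg1.add (hψpart.const_mul 2)
    have hlocmin : IsLocalMin g 0 := by
      filter_upwards [ev1, ev2, ev3] with h h1 h2 h3
      have hne' : xc h ≠ yc h := by
        intro hEq
        apply h3
        rw [← hpyx h, hEq, sub_self]
      have hCg : C (xc h) (yc h) t₀ = g h := by
        rw [hC _ _ t₀ hne', hg_def, hpyx h]
      have hg0 : g 0 = C x₀ y₀ t₀ := by
        rw [hCval, hg_def]
        simp only [hyc0, hxc0, hnrm0, hp0]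
        rfl
      rw [hg0, ← hCg]
      exact hmin (xc h) h1 (yc h) h2 t₀ ⟨ht₀.1.le, le_rfl⟩
    have hG0 := hlocmin.hasDerivAt_eq_zero hgd
    rw [hyc0, hxc0, hnrm0, hp0] at hG0
    have hWu : ⟪X y₀ t₀ - X x₀ t₀, d⁻¹ • W + (-⟪W, e⟫ / (d * d)) • (y₀ - x₀)⟫
        = d⁻¹ * (⟪W, W⟫ - ⟪W, e⟫ * ⟪W, e⟫) := by
      rw [← hW_def, hpe, inner_add_right, real_inner_smul_right, real_inner_smul_right,
        real_inner_smul_right]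
      rw [← hpe]
      generalize ⟪W, y₀ - x₀⟫ = B
      generalize ⟪W, W⟫ = A
      field_simp [hd0.ne']
      try ring
    have hcompY : ∀ k : Fin n, fderiv ℝ (fun w' => X w' t₀ k) y₀
        = (EuclideanSpace.proj (𝕜 := ℝ) k).comp (fderiv ℝ (fun z => X z t₀) y₀) :=
      fun k => ((EuclideanSpace.proj (𝕜 := ℝ) k).hasFDerivAt.comp y₀ hXdy.hasFDerivAt).fderiv
    have hcompX : ∀ k : Fin n, fderiv ℝ (fun w' => X w' t₀ k) x₀
        = (EuclideanSpace.proj (𝕜 := ℝ) k).comp (fderiv ℝ (fun z => X z t₀) x₀) :=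
      fun k => ((EuclideanSpace.proj (𝕜 := ℝ) k).hasFDerivAt.comp x₀ hXdx.hasFDerivAt).fderiv
    have hDe : ⟪fderiv ℝ (fun z => X z t₀) y₀ (X y₀ t₀) - fderiv ℝ (fun z => X z t₀) x₀ (X x₀ t₀), e⟫
        = (∑ k, (∑ j, X y₀ t₀ j * fderiv ℝ (fun w => X w t₀ k) y₀ (EuclideanSpace.single j 1)) * e k)
        - (∑ k, (∑ j, X x₀ t₀ j * fderiv ℝ (fun w => X w t₀ k) x₀ (EuclideanSpace.single j 1)) * e k) := by
      rw [inner_sub_left, inner_eq_sum, inner_eq_sum]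
      congr 1
      · refine Finset.sum_congr rfl fun k _ => ?_
        congr 1
        have h1 : (fderiv ℝ (fun z => X z t₀) y₀ (X y₀ t₀)) k
            = fderiv ℝ (fun w => X w t₀ k) y₀ (X y₀ t₀) := by rw [hcompY k]; rfl
        rw [h1, clm_apply_eq_sum]
      · refine Finset.sum_congr rfl fun k _ => ?_
        congr 1
        have h1 : (fderiv ℝ (fun z => X z t₀) x₀ (X x₀ t₀)) k
            = fderiv ℝ (fun w => X w t₀ k) x₀ (X x₀ t₀) := by rw [hcompX k]; rfl
        rw [h1, clm_apply_eq_sum]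
    rw [hWu] at hG0
    have he_fold : d⁻¹ • (y₀ - x₀) = e := he_def.symm
    rw [he_fold, hDe] at hG0
    linarith [hG0]

  have KV : 2 * ω s₀ ≤ (∑ k, V y₀ (X y₀ t₀) k * e k) - (∑ k, V x₀ (X x₀ t₀) k * e k) := by
    have h := hVexp t₀ ht₀T x₀ hx₀ y₀ hy₀ hne
    rw [← hd_def, ← he_def, ← hs₀_def] at h
    rw [inner_sub_left, inner_eq_sum, inner_eq_sum] at h
    exact h
  have hCS : ⟪W, e⟫ * ⟪W, e⟫ ≤ ⟪W, W⟫ := by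
    have h := real_inner_mul_inner_self_le W e
    have h1 : ⟪e, e⟫ = 1 := by rw [real_inner_self_eq_norm_mul_norm, he1]; norm_num
    nlinarith [real_inner_self_nonneg (F := EuclideanSpace ℝ (Fin n)) (x := W)]
  -- final contradiction
  have hODE' := hODE s₀ hs₀Ico t₀ ht₀T
  have hψneg' := hψneg s₀ hs₀Ico t₀ ht₀T
  have hWe : ⟪W, e⟫ + 2 * ψ s₀ t₀ < 0 := by rw [← hCval]; exact hneg
  have hdinv : 0 < d⁻¹ := by positivity
  nlinarith [mul_pos_of_neg_of_neg hψneg' hWe,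
    mul_nonneg hdinv.le (sub_nonneg.mpr hCS)]
end

section
/- Let Ω ⊂ ℝⁿ be a bounded open set with C² boundary whose second fundamental form with respect to the outward normal is positive definite (strictly convex), with diameter D, and let q be a convex function, C¹ on the closure of Ω. Let φ₀ be a first Dirichlet eigenfunction of L_q = Δ − q with eigenvalue λ₀. Then λ₀ ≥ n(π/D)² + inf_{x ∈ Ω} q(x). -/
open scoped RealInnerProductSpace
open Set MeasureTheory

section auxiliary

open Filter Topology

variable {E : Type*} [NormedAddCommGroup E] [NormedSpace ℝ E]

/-- Second directional derivative. -/
noncomputable def d2 (f : E → ℝ) (x v : E) : ℝ :=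
  fderiv ℝ (fun y => fderiv ℝ f y v) x v

theorem aux_diffFderivApply {f : E → ℝ} {x : E} (hf : ContDiffAt ℝ 2 f x) (v : E) :
    DifferentiableAt ℝ (fun y => fderiv ℝ f y v) x := by
  have h1 : ContDiffAt ℝ 1 (fderiv ℝ f) x := hf.fderiv_right (by norm_num)
  exact (h1.differentiableAt (by norm_num)).clm_apply (differentiableAt_const v)

theorem aux_ev_diff {f : E → ℝ} {x : E} (hf : ContDiffAt ℝ 2 f x) :
    ∀ᶠ y in 𝓝 x, DifferentiableAt ℝ f y :=
  (hf.eventually (by norm_num)).mono fun y hy => hy.differentiableAt (by norm_num)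

theorem aux_lineHasDeriv (x v : E) (t : ℝ) :
    HasDerivAt (fun s : ℝ => x + s • v) v t := by
  simpa using ((hasDerivAt_id t).smul_const v).const_add x

theorem aux_hasDerivAt_fderiv_line {f : E → ℝ} {x v : E} (hf : ContDiffAt ℝ 2 f x) :
    HasDerivAt (fun t : ℝ => fderiv ℝ f (x + t • v) v) (d2 f x v) 0 := by
  have hFf := aux_diffFderivApply hf v
  have hc : HasFDerivAt (fun y => fderiv ℝ f y v)
      (fderiv ℝ (fun y => fderiv ℝ f y v) x) ((fun s : ℝ => x + s • v) 0) := by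
    simpa using hFf.hasFDerivAt
  simpa [d2, Function.comp_def] using hc.comp_hasDerivAt 0 (aux_lineHasDeriv x v 0)

theorem aux_deriv_line_eventually {f : E → ℝ} {x v : E} (hf : ContDiffAt ℝ 2 f x) :
    (fun t : ℝ => fderiv ℝ f (x + t • v) v) =ᶠ[𝓝 (0:ℝ)]
      deriv (fun t : ℝ => f (x + t • v)) := by
  have htend : Tendsto (fun t : ℝ => x + t • v) (𝓝 0) (𝓝 x) := by
    have : ContinuousAt (fun t : ℝ => x + t • v) 0 := by fun_prop
    simpa using this.tendsto
  filter_upwards [htend.eventually (aux_ev_diff hf)] with t ht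
  exact ((ht.hasFDerivAt.comp_hasDerivAt t (aux_lineHasDeriv x v t))).deriv.symm

theorem aux_diff_line_eventually {f : E → ℝ} {x v : E} (hf : ContDiffAt ℝ 2 f x) :
    ∀ᶠ t in 𝓝 (0:ℝ), DifferentiableAt ℝ (fun s : ℝ => f (x + s • v)) t := by
  have htend : Tendsto (fun t : ℝ => x + t • v) (𝓝 0) (𝓝 x) := by
    have : ContinuousAt (fun t : ℝ => x + t • v) 0 := by fun_prop
    simpa using this.tendsto
  filter_upwards [htend.eventually (aux_ev_diff hf)] with t ht
  exact ((ht.hasFDerivAt.comp_hasDerivAt t (aux_lineHasDeriv x v t))).differentiableAt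

theorem aux_hasDerivAt_deriv_line {f : E → ℝ} {x v : E} (hf : ContDiffAt ℝ 2 f x) :
    HasDerivAt (deriv (fun t : ℝ => f (x + t • v))) (d2 f x v) 0 :=
  (aux_deriv_line_eventually hf).hasDerivAt_iff.mp (aux_hasDerivAt_fderiv_line hf)

theorem aux_deriv2_nonpos_1d {g : ℝ → ℝ} (hmax : IsLocalMax g 0)
    (hev : ∀ᶠ t in 𝓝 (0:ℝ), DifferentiableAt ℝ g t)
    {c : ℝ} (hc : HasDerivAt (deriv g) c 0) : c ≤ 0 := by
  by_contra hpos
  push_neg at hpos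
  have hd0 : deriv g 0 = 0 := hmax.deriv_eq_zero
  have hslope : Tendsto (slope (deriv g) 0) (𝓝[≠] 0) (𝓝 c) :=
    hasDerivAt_iff_tendsto_slope.mp hc
  have hgt : ∀ᶠ t in 𝓝[≠] (0:ℝ), c / 2 < slope (deriv g) 0 t :=
    hslope.eventually (eventually_gt_nhds (by linarith))
  have hmono : 𝓝[>] (0:ℝ) ≤ 𝓝[≠] (0:ℝ) :=
    nhdsWithin_mono 0 (fun t ht => ne_of_gt ht)
  have hgt' : ∀ᶠ t in 𝓝[>] (0:ℝ), 0 < deriv g t := by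
    filter_upwards [hgt.filter_mono hmono, self_mem_nhdsWithin] with t ht ht0
    have hts : slope (deriv g) 0 t = deriv g t / t := by
      rw [slope_def_field, hd0]; ring
    rw [hts] at ht
    have ht0' : (0:ℝ) < t := ht0
    have := (lt_div_iff₀ ht0').mp ht
    nlinarith
  obtain ⟨u, huo, hu0, husub⟩ := mem_nhdsWithin.mp hgt'
  obtain ⟨δ₂, hδ₂, hball⟩ := Metric.isOpen_iff.mp huo 0 hu0
  obtain ⟨δ₁, hδ₁, h1⟩ := Metric.eventually_nhds_iff.mp (hev.and hmax)
  set δ : ℝ := min δ₁ δ₂ with hδdef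
  have hδ : 0 < δ := lt_min hδ₁ hδ₂
  set b : ℝ := δ / 2 with hbdef
  have hb : 0 < b := by positivity
  have hcont : ContinuousOn g (Icc 0 b) := by
    intro t ht
    have hd : dist t 0 < δ₁ := by
      rw [Real.dist_eq, sub_zero, abs_of_nonneg ht.1]
      have h2 : δ ≤ δ₁ := min_le_left _ _
      have h3 : t ≤ δ / 2 := ht.2
      linarith
    exact ((h1 hd).1).continuousAt.continuousWithinAt
  have hderiv : ∀ t ∈ interior (Icc (0:ℝ) b), 0 < deriv g t := by
    intro t ht
    rw [interior_Icc] at ht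
    apply husub
    constructor
    · apply hball
      rw [Metric.mem_ball, Real.dist_eq, sub_zero, abs_of_pos ht.1]
      have h2 : δ ≤ δ₂ := min_le_right _ _
      have h3 := ht.2
      linarith
    · exact ht.1
  have hsm := strictMonoOn_of_deriv_pos (convex_Icc 0 b) hcont hderiv
  have hlt : g 0 < g b := hsm (left_mem_Icc.mpr hb.le) (right_mem_Icc.mpr hb.le) hb
  have hle : g b ≤ g 0 := by
    refine (h1 ?_).2
    rw [Real.dist_eq, sub_zero, abs_of_pos hb]
    have h2 : δ ≤ δ₁ := min_le_left _ _
    linarith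
  linarith

theorem aux_d2_nonpos_of_isLocalMax {f : E → ℝ} {x : E} (hf : ContDiffAt ℝ 2 f x)
    (hmax : IsLocalMax f x) (v : E) : d2 f x v ≤ 0 := by
  have htend : Filter.Tendsto (fun t : ℝ => x + t • v) (𝓝 0) (𝓝 x) := by
    have : ContinuousAt (fun t : ℝ => x + t • v) 0 := by fun_prop
    simpa using this.tendsto
  have hgmax : IsLocalMax (fun t : ℝ => f (x + t • v)) 0 := by
    have := htend.eventually hmax
    simpa [IsLocalMax, IsMaxFilter] using this
  exact aux_deriv2_nonpos_1d hgmax (aux_diff_line_eventually hf)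
    (aux_hasDerivAt_deriv_line hf)

theorem aux_d2_sub_const_mul {f g : E → ℝ} {x : E} (hf : ContDiffAt ℝ 2 f x)
    (hg : ContDiffAt ℝ 2 g x) (m : ℝ) (v : E) :
    d2 (fun y => f y - m * g y) x v = d2 f x v - m * d2 g x v := by
  have heq : (fun y => fderiv ℝ (fun z => f z - m * g z) y v)
      =ᶠ[𝓝 x] (fun y => fderiv ℝ f y v - m * fderiv ℝ g y v) := by
    filter_upwards [aux_ev_diff hf, aux_ev_diff hg] with y hfy hgy
    rw [fderiv_fun_sub hfy (hgy.const_mul m), fderiv_const_mul hgy m]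
    simp
  have hFf := aux_diffFderivApply hf v
  have hFg := aux_diffFderivApply hg v
  unfold d2
  rw [heq.fderiv_eq, fderiv_fun_sub hFf (hFg.const_mul m), fderiv_const_mul hFg m]
  simp

end auxiliary

section euclidaux

open Filter Topology

variable {n : ℕ}

theorem aux_coord_abs_le_dist (x y : EuclideanSpace ℝ (Fin n)) (j : Fin n) :
    |x j - y j| ≤ dist x y := by
  have h1 : dist (x j) (y j) ^ 2 ≤ ∑ i, dist (x i) (y i) ^ 2 :=
    Finset.single_le_sum (f := fun i => dist (x i) (y i) ^ 2)
      (fun i _ => sq_nonneg _) (Finset.mem_univ j)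
  calc |x j - y j| = dist (x j) (y j) := (Real.dist_eq _ _).symm
    _ = Real.sqrt (dist (x j) (y j) ^ 2) := (Real.sqrt_sq dist_nonneg).symm
    _ ≤ Real.sqrt (∑ i, dist (x i) (y i) ^ 2) := Real.sqrt_le_sqrt h1
    _ = dist x y := (EuclideanSpace.dist_eq x y).symm

theorem aux_contDiff_finset_prod {ι : Type*} [DecidableEq ι]
    {f : ι → EuclideanSpace ℝ (Fin n) → ℝ} (s : Finset ι)
    (h : ∀ i ∈ s, ContDiff ℝ 2 (f i)) :
    ContDiff ℝ 2 (fun x => ∏ i ∈ s, f i x) := by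
  induction s using Finset.induction with
  | empty => simpa using contDiff_const
  | @insert a s hni ih =>
    simp only [Finset.prod_insert hni]
    exact (h a (Finset.mem_insert_self _ _)).mul
      (ih fun i hi => h i (Finset.mem_insert_of_mem hi))

theorem aux_contDiff_sin_prod (k : ℝ) (c : Fin n → ℝ) :
    ContDiff ℝ 2 (fun x : EuclideanSpace ℝ (Fin n) => ∏ j, Real.sin (k * (x j - c j))) := by
  apply aux_contDiff_finset_prod
  intro j _
  have hproj : ContDiff ℝ 2 (fun x : EuclideanSpace ℝ (Fin n) => x j) :=
    by have := (EuclideanSpace.proj (𝕜 := ℝ) (ι := Fin n) j).contDiff (n := 2); exact this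
  exact (Real.contDiff_sin.of_le le_top).comp
    (contDiff_const.mul (hproj.sub contDiff_const))

theorem aux_d2_sin_prod (k : ℝ) (c : Fin n → ℝ) (x : EuclideanSpace ℝ (Fin n)) (i : Fin n) :
    d2 (fun y : EuclideanSpace ℝ (Fin n) => ∏ j, Real.sin (k * (y j - c j))) x
      (EuclideanSpace.single i 1)
      = -(k ^ 2) * ∏ j, Real.sin (k * (x j - c j)) := by
  classical
  set ψ := fun y : EuclideanSpace ℝ (Fin n) => ∏ j, Real.sin (k * (y j - c j)) with hψ
  set C := ∏ j ∈ Finset.univ.erase i, Real.sin (k * (x j - c j)) with hC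
  have happly : ∀ (t : ℝ) (j : Fin n),
      ((x + t • EuclideanSpace.single i 1 : EuclideanSpace ℝ (Fin n))) j
        = x j + t * (if j = i then 1 else 0) := by
    intro t j
    have h1 : ((x + t • EuclideanSpace.single i 1 : EuclideanSpace ℝ (Fin n))) j
        = x j + t * (EuclideanSpace.single i (1:ℝ)) j := rfl
    rw [h1, EuclideanSpace.single_apply]
  have hline : (fun t : ℝ => ψ (x + t • EuclideanSpace.single i 1))
      = fun t : ℝ => Real.sin (k * (x i + t - c i)) * C := by
    funext t
    show (∏ j, Real.sin
        (k * ((x + t • EuclideanSpace.single i 1 : EuclideanSpace ℝ (Fin n)) j - c j))) = _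
    have hstep : (∏ j, Real.sin
        (k * ((x + t • EuclideanSpace.single i 1 : EuclideanSpace ℝ (Fin n)) j - c j)))
        = ∏ j, Real.sin (k * ((x j + t * if j = i then 1 else 0) - c j)) :=
      Finset.prod_congr rfl (fun j _ => by rw [happly t j])
    rw [hstep, ← Finset.mul_prod_erase Finset.univ _ (Finset.mem_univ i)]
    congr 1
    · rw [if_pos rfl]; ring_nf
    · rw [hC]
      exact Finset.prod_congr rfl fun j hj => by
        rw [if_neg (Finset.ne_of_mem_erase hj)]; ring_nf
  have hA : ∀ t : ℝ, HasDerivAt (fun s : ℝ => k * (x i + s - c i)) k t := by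
    intro t
    simpa using (((hasDerivAt_id t).const_add (x i)).sub_const (c i)).const_mul k
  have hderiv : deriv (fun t : ℝ => Real.sin (k * (x i + t - c i)) * C)
      = fun t => Real.cos (k * (x i + t - c i)) * k * C := by
    funext t
    exact (((Real.hasDerivAt_sin _).comp t (hA t)).mul_const C).deriv
  have h2 : HasDerivAt (fun t : ℝ => Real.cos (k * (x i + t - c i)) * k * C)
      (-Real.sin (k * (x i + 0 - c i)) * k * k * C) 0 :=
    (((Real.hasDerivAt_cos _).comp 0 (hA 0)).mul_const k).mul_const C
  have hbridge := aux_hasDerivAt_deriv_line (f := ψ) (x := x)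
      (v := EuclideanSpace.single i 1) ((aux_contDiff_sin_prod k c).contDiffAt)
  rw [hline, hderiv] at hbridge
  have hval := hbridge.unique h2
  rw [hval, ← Finset.mul_prod_erase Finset.univ
    (fun j => Real.sin (k * (x j - c j))) (Finset.mem_univ i), ← hC]
  norm_num
  ring

end euclidaux
theorem stmt_10 {n : ℕ}
    (Ω : Set (EuclideanSpace ℝ (Fin n))) (ρ : EuclideanSpace ℝ (Fin n) → ℝ)
    (hΩ : IsOpen Ω) (hbd : Bornology.IsBounded Ω)
    (hρ : ContDiff ℝ 2 ρ)
    (hΩρ : Ω = {x | ρ x < 0})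
    (hfr : frontier Ω = {x | ρ x = 0})
    (hν : ∀ x ∈ frontier Ω, gradient ρ x ≠ 0)
    (hsc : ∀ x ∈ frontier Ω, ∀ v : EuclideanSpace ℝ (Fin n), v ≠ 0 → ⟪gradient ρ x, v⟫ = 0 →
      0 < fderiv ℝ (fun y => fderiv ℝ ρ y v) x v)
    (hne : Ω.Nonempty)
    (D : ℝ) (hD : Metric.diam Ω = D)
    (q : EuclideanSpace ℝ (Fin n) → ℝ)
    (hq : ConvexOn ℝ (closure Ω) q) (hqC : ContDiffOn ℝ 1 q (closure Ω))
    (φ₀ : EuclideanSpace ℝ (Fin n) → ℝ) (lam0 : ℝ)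
    (hφC : ContDiffOn ℝ 2 φ₀ (closure Ω))
    (hφpos : ∀ x ∈ Ω, 0 < φ₀ x)
    (hφbd : ∀ x ∈ frontier Ω, φ₀ x = 0)
    (hφν : ∀ x ∈ frontier Ω, fderivWithin ℝ φ₀ (closure Ω) x (gradient ρ x) < 0)
    (heig : ∀ x ∈ Ω, lap φ₀ x - q x * φ₀ x = -lam0 * φ₀ x)
 :
    (n : ℝ) * (Real.pi / D) ^ 2 + sInf (q '' Ω) ≤ lam0 := by
  classical
  have hD0 : 0 ≤ D := hD ▸ Metric.diam_nonneg
  have hKcomp : IsCompact (closure Ω) := hbd.isCompact_closure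
  have hKne : (closure Ω).Nonempty := hne.closure
  have hqbdd : BddBelow (q '' Ω) := by
    have h1 : IsCompact (q '' closure Ω) := hKcomp.image_of_continuousOn hqC.continuousOn
    exact h1.bddBelow.mono (image_mono (f := q) subset_closure)
  obtain ⟨w, hw⟩ := hne
  -- main claim, for an enlarged box of side D + 2ε
  have key : ∀ ε : ℝ, 0 < ε →
      (n : ℝ) * (Real.pi / (D + 2 * ε)) ^ 2 + sInf (q '' Ω) ≤ lam0 := by
    intro ε hε
    set k := Real.pi / (D + 2 * ε) with hk
    have hDk : 0 < D + 2 * ε := by linarith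
    have hkpos : 0 < k := div_pos Real.pi_pos hDk
    set c : Fin n → ℝ :=
      fun j => sInf ((fun y : EuclideanSpace ℝ (Fin n) => y j) '' Ω) - ε with hc
    have hcoord : ∀ x ∈ closure Ω, ∀ j : Fin n,
        ε ≤ x j - c j ∧ x j - c j ≤ D + ε := by
      intro x hx j
      set S := (fun y : EuclideanSpace ℝ (Fin n) => y j) '' Ω with hS
      have hSne : S.Nonempty := Set.Nonempty.image _ ⟨w, hw⟩
      have hSbdd : BddBelow S := by
        refine ⟨w j - D, ?_⟩
        rintro s ⟨y, hy, rfl⟩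
        have h1 : |y j - w j| ≤ dist y w := aux_coord_abs_le_dist y w j
        have h2 : dist y w ≤ D := hD ▸ Metric.dist_le_diam_of_mem hbd hy hw
        have h3 := abs_le.mp (h1.trans h2)
        linarith [h3.1]
      have hlow : sInf S ≤ x j := by
        have h1 : x j ∈ (fun y : EuclideanSpace ℝ (Fin n) => y j) '' closure Ω :=
          mem_image_of_mem _ hx
        have h2 := image_closure_subset_closure_image
          (f := fun y : EuclideanSpace ℝ (Fin n) => y j) (s := Ω)
          (EuclideanSpace.proj j).continuous
        have h3 : closure S ⊆ Ici (sInf S) :=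
          closure_minimal (fun s hs => csInf_le hSbdd hs) isClosed_Ici
        exact h3 (h2 h1)
      have hup : x j ≤ sInf S + D := by
        have h4 : x j - D ≤ sInf S := by
          apply le_csInf hSne
          rintro s ⟨y, hy, rfl⟩
          have h1 : |x j - y j| ≤ dist x y := aux_coord_abs_le_dist x y j
          have h2 : dist x y ≤ D := by
            have h5 := Metric.dist_le_diam_of_mem hbd.closure hx (subset_closure hy)
            rwa [Metric.diam_closure, hD] at h5
          have h3 := abs_le.mp (h1.trans h2)
          linarith [h3.2]
        linarith
      constructor <;> simp only [hc] <;> linarith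
    set ψ := fun y : EuclideanSpace ℝ (Fin n) => ∏ j, Real.sin (k * (y j - c j)) with hψ
    have hψC : ContDiff ℝ 2 ψ := aux_contDiff_sin_prod k c
    have hψpos : ∀ x ∈ closure Ω, 0 < ψ x := by
      intro x hx
      apply Finset.prod_pos
      intro j _
      obtain ⟨hl, hu⟩ := hcoord x hx j
      apply Real.sin_pos_of_pos_of_lt_pi
      · exact mul_pos hkpos (by linarith)
      · have h1 : k * (x j - c j) ≤ k * (D + ε) :=
          mul_le_mul_of_nonneg_left hu hkpos.le
        have h2 : k * (D + ε) < Real.pi := by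
          rw [hk, div_mul_eq_mul_div, div_lt_iff₀ hDk]
          nlinarith [Real.pi_pos]
        linarith
    have hφcont : ContinuousOn φ₀ (closure Ω) := hφC.continuousOn
    have hFcont : ContinuousOn (fun x => φ₀ x / ψ x) (closure Ω) :=
      hφcont.div (hψC.continuous.continuousOn) (fun y hy => (hψpos y hy).ne')
    obtain ⟨x₀, hx₀K, hx₀max⟩ := hKcomp.exists_isMaxOn hKne hFcont
    have hx₀max' : ∀ y ∈ closure Ω, φ₀ y / ψ y ≤ φ₀ x₀ / ψ x₀ :=
      fun y hy => hx₀max hy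
    have hFw : 0 < φ₀ w / ψ w :=
      div_pos (hφpos w hw) (hψpos w (subset_closure hw))
    have hx₀Ω : x₀ ∈ Ω := by
      by_contra hx₀
      have hfr' : x₀ ∈ frontier Ω := by
        rw [frontier, hΩ.interior_eq]
        exact ⟨hx₀K, hx₀⟩
      have h0 : φ₀ x₀ = 0 := hφbd x₀ hfr'
      have h1 := hx₀max' w (subset_closure hw)
      rw [h0, zero_div] at h1
      linarith
    have hψx₀ : 0 < ψ x₀ := hψpos x₀ hx₀K
    have hφx₀ : 0 < φ₀ x₀ := hφpos x₀ hx₀Ω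
    set m := φ₀ x₀ / ψ x₀ with hm
    have hmψ : m * ψ x₀ = φ₀ x₀ := div_mul_cancel₀ _ hψx₀.ne'
    have hclosNhd : closure Ω ∈ nhds x₀ :=
      Filter.mem_of_superset (hΩ.mem_nhds hx₀Ω) subset_closure
    have hφat : ContDiffAt ℝ 2 φ₀ x₀ := hφC.contDiffAt hclosNhd
    have hψat : ContDiffAt ℝ 2 ψ x₀ := hψC.contDiffAt
    have humax : IsLocalMax (fun y => φ₀ y - m * ψ y) x₀ := by
      filter_upwards [hΩ.mem_nhds hx₀Ω] with y hy
      have h1 : φ₀ y / ψ y ≤ m := hx₀max' y (subset_closure hy)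
      have h2 : 0 < ψ y := hψpos y (subset_closure hy)
      have h3 : φ₀ y ≤ m * ψ y := by
        rw [div_le_iff₀ h2] at h1; linarith
      show φ₀ y - m * ψ y ≤ φ₀ x₀ - m * ψ x₀
      linarith [hmψ]
    have huat : ContDiffAt ℝ 2 (fun y => φ₀ y - m * ψ y) x₀ :=
      hφat.sub (contDiffAt_const.mul hψat)
    have hlapu : ∀ i : Fin n,
        d2 (fun y => φ₀ y - m * ψ y) x₀ (EuclideanSpace.single i 1) ≤ 0 :=
      fun i => aux_d2_nonpos_of_isLocalMax huat humax _
    have hlin : ∀ i : Fin n,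
        d2 (fun y => φ₀ y - m * ψ y) x₀ (EuclideanSpace.single i 1)
          = d2 φ₀ x₀ (EuclideanSpace.single i 1)
            - m * d2 ψ x₀ (EuclideanSpace.single i 1) :=
      fun i => aux_d2_sub_const_mul hφat hψat m _
    have hψd2 : ∀ i : Fin n,
        d2 ψ x₀ (EuclideanSpace.single i 1) = -(k ^ 2) * ψ x₀ :=
      fun i => aux_d2_sin_prod k c x₀ i
    have hlapφ : lap φ₀ x₀ = ∑ i, d2 φ₀ x₀ (EuclideanSpace.single i 1) := rfl
    have hsum : lap φ₀ x₀ + m * ((n : ℝ) * (k ^ 2 * ψ x₀)) ≤ 0 := by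
      have h1 : ∑ i, d2 (fun y => φ₀ y - m * ψ y) x₀ (EuclideanSpace.single i 1) ≤ 0 :=
        Finset.sum_nonpos (fun i _ => hlapu i)
      have h2 : ∑ i, d2 (fun y => φ₀ y - m * ψ y) x₀ (EuclideanSpace.single i 1)
          = ∑ i, d2 φ₀ x₀ (EuclideanSpace.single i 1)
            - m * ∑ i, d2 ψ x₀ (EuclideanSpace.single i 1) := by
        rw [Finset.mul_sum, ← Finset.sum_sub_distrib]
        exact Finset.sum_congr rfl fun i _ => hlin i
      have h3 : ∑ i, d2 ψ x₀ (EuclideanSpace.single i 1) = (n : ℝ) * (-(k ^ 2) * ψ x₀) := by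
        rw [Finset.sum_congr rfl fun i _ => hψd2 i, Finset.sum_const, Finset.card_univ]
        simp [nsmul_eq_mul]
      rw [h2, h3] at h1
      rw [hlapφ]
      linarith
    have heq := heig x₀ hx₀Ω
    have hqx : (n : ℝ) * k ^ 2 + q x₀ ≤ lam0 := by
      have hms : m * ((n : ℝ) * (k ^ 2 * ψ x₀)) = (n : ℝ) * k ^ 2 * φ₀ x₀ := by
        rw [← hmψ]; ring
      have hsum' : lap φ₀ x₀ + (n : ℝ) * k ^ 2 * φ₀ x₀ ≤ 0 := by linarith [hsum, hms]
      nlinarith [hsum', heq, hφx₀]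
    have hsinf : sInf (q '' Ω) ≤ q x₀ := csInf_le hqbdd (mem_image_of_mem q hx₀Ω)
    calc (n : ℝ) * (Real.pi / (D + 2 * ε)) ^ 2 + sInf (q '' Ω)
        = (n : ℝ) * k ^ 2 + sInf (q '' Ω) := by rw [hk]
      _ ≤ (n : ℝ) * k ^ 2 + q x₀ := by linarith
      _ ≤ lam0 := hqx
  by_cases hn : n = 0
  · subst hn
    have h1 := key 1 one_pos
    simpa using h1
  · have hDpos : 0 < D := by
      obtain ⟨r, hr, hball⟩ := Metric.isOpen_iff.mp hΩ w hw
      set i0 : Fin n := ⟨0, Nat.pos_of_ne_zero hn⟩ with hi0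
      set w' := w + (r / 2) • EuclideanSpace.single i0 (1:ℝ) with hw'
      have hdist : dist w' w = r / 2 := by
        rw [dist_eq_norm, hw', add_sub_cancel_left, norm_smul,
          EuclideanSpace.norm_single]
        rw [norm_one, mul_one, Real.norm_eq_abs, abs_of_pos (by linarith)]
      have hw'Ω : w' ∈ Ω := hball (by rw [Metric.mem_ball, hdist]; linarith)
      have h1 : r / 2 ≤ D := by
        rw [← hD, ← hdist]
        exact Metric.dist_le_diam_of_mem hbd hw'Ω hw
      linarith
    have hcont : ContinuousAt
        (fun ε : ℝ => (n : ℝ) * (Real.pi / (D + 2 * ε)) ^ 2 + sInf (q '' Ω)) 0 := by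
      have h1 : ContinuousAt (fun ε : ℝ => D + 2 * ε) 0 := by fun_prop
      have h2 : (fun ε : ℝ => D + 2 * ε) 0 ≠ 0 := by
        simpa using hDpos.ne'
      exact (((continuousAt_const.div h1 h2).pow 2).const_mul _).add continuousAt_const
    have htend : Filter.Tendsto
        (fun ε : ℝ => (n : ℝ) * (Real.pi / (D + 2 * ε)) ^ 2 + sInf (q '' Ω))
        (nhdsWithin 0 (Ioi 0)) (nhds ((n : ℝ) * (Real.pi / D) ^ 2 + sInf (q '' Ω))) := by
      have h3 := hcont.tendsto
      have h4 : (n : ℝ) * (Real.pi / (D + 2 * 0)) ^ 2 + sInf (q '' Ω)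
          = (n : ℝ) * (Real.pi / D) ^ 2 + sInf (q '' Ω) := by norm_num
      rw [h4] at h3
      exact h3.mono_left nhdsWithin_le_nhds
    exact le_of_tendsto htend
      (eventually_nhdsWithin_of_forall (fun ε hε => key ε hε))
end

section
/- Let Ω ⊂ ℝⁿ be a bounded open set, let φ₀ be C² on the closure of Ω with ‖φ₀‖_{C²(closure Ω)} ≤ A/2, and let δ₀, θ₁, θ₂ > 0 be such that |∇φ₀| ≥ θ₁ on the set {x ∈ Ω : φ₀(x) ≤ δ₀} and, for every 0 < δ ≤ δ₀, the level hypersurface {φ₀ = δ} is smooth with second fundamental form II (with respect to the normal −∇φ₀/|∇φ₀|) satisfying II ≥ θ₂ I, where I is the induced metric. Then for every point x with 0 < φ₀(x) ≤ δ₀ and every unit vector W, decomposed as W = W^T + W^⊥ with W^T tangent to the level hypersurface of φ₀ through x and W^⊥ normal to it, one has ∇²φ₀(W, W) ≤ −(θ₁θ₂/2)|W^T|² + C₁|W^⊥|², where C₁ = (A²/(θ₁θ₂) + A)/2. -/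
open scoped RealInnerProductSpace
open Set MeasureTheory

theorem stmt_18 {n : ℕ} (Ω : Set (EuclideanSpace ℝ (Fin n)))
    (hΩ : IsOpen Ω) (hbd : Bornology.IsBounded Ω)
    (φ₀ : EuclideanSpace ℝ (Fin n) → ℝ) (A δ₀ θ₁ θ₂ : ℝ)
    (hδ₀ : 0 < δ₀) (hθ₁ : 0 < θ₁) (hθ₂ : 0 < θ₂)
    (hφC : ContDiffOn ℝ 2 φ₀ (closure Ω))
    (hC2 : ∀ x ∈ Ω, |φ₀ x| ≤ A / 2 ∧ ‖gradient φ₀ x‖ ≤ A / 2 ∧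
      ∀ v u : EuclideanSpace ℝ (Fin n), |fderiv ℝ (fun y => fderiv ℝ φ₀ y v) x u| ≤ A / 2 * ‖v‖ * ‖u‖)
    (hgrad : ∀ x ∈ Ω, φ₀ x ≤ δ₀ → θ₁ ≤ ‖gradient φ₀ x‖)
    (hII : ∀ x ∈ Ω, 0 < φ₀ x → φ₀ x ≤ δ₀ → ∀ v : EuclideanSpace ℝ (Fin n),
      ⟪gradient φ₀ x, v⟫ = 0 →
      fderiv ℝ (fun y => fderiv ℝ φ₀ y v) x v ≤ -θ₂ * ‖gradient φ₀ x‖ * ‖v‖ ^ 2) :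
    ∀ x ∈ Ω, 0 < φ₀ x → φ₀ x ≤ δ₀ →
      ∀ W Wt Wp : EuclideanSpace ℝ (Fin n), ‖W‖ = 1 → W = Wt + Wp →
        ⟪gradient φ₀ x, Wt⟫ = 0 → (∃ c : ℝ, Wp = c • gradient φ₀ x) →
        fderiv ℝ (fun y => fderiv ℝ φ₀ y W) x W ≤
          -(θ₁ * θ₂ / 2) * ‖Wt‖ ^ 2 + ((A ^ 2 / (θ₁ * θ₂) + A) / 2) * ‖Wp‖ ^ 2 := by
  intro x hx hpos hle W Wt Wp hW1 hWdecomp htan hperp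
  have hx2 : ContDiffAt ℝ 2 φ₀ x :=
    hφC.contDiffAt (Filter.mem_of_superset (hΩ.mem_nhds hx) subset_closure)
  have hdf : DifferentiableAt ℝ (fderiv ℝ φ₀) x :=
    (hx2.fderiv_right (m := 1) (le_refl 2)).differentiableAt one_ne_zero
  have hd : ∀ v : EuclideanSpace ℝ (Fin n),
      DifferentiableAt ℝ (fun y => fderiv ℝ φ₀ y v) x := fun v =>
    hdf.clm_apply (differentiableAt_const v)
  have hadd : ∀ v w : EuclideanSpace ℝ (Fin n),
      fderiv ℝ (fun y => fderiv ℝ φ₀ y (v + w)) x =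
        fderiv ℝ (fun y => fderiv ℝ φ₀ y v) x + fderiv ℝ (fun y => fderiv ℝ φ₀ y w) x := by
    intro v w
    have heq : (fun y => fderiv ℝ φ₀ y (v + w)) =
        (fun y => fderiv ℝ φ₀ y v + fderiv ℝ φ₀ y w) := by
      funext y; exact map_add _ v w
    rw [heq]; exact fderiv_add (hd v) (hd w)
  set H : EuclideanSpace ℝ (Fin n) → EuclideanSpace ℝ (Fin n) → ℝ :=
    fun v u => fderiv ℝ (fun y => fderiv ℝ φ₀ y v) x u with hH
  have hsplit : fderiv ℝ (fun y => fderiv ℝ φ₀ y W) x W =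
      H Wt Wt + H Wt Wp + H Wp Wt + H Wp Wp := by
    rw [hWdecomp, hadd Wt Wp]
    simp [hH, map_add]
    ring
  rw [hsplit]
  obtain ⟨-, -, hC2x⟩ := hC2 x hx
  have hA : 0 ≤ A := by
    have := (hC2 x hx).1
    have := abs_nonneg (φ₀ x)
    linarith
  have ht1 : θ₁ ≤ ‖gradient φ₀ x‖ := hgrad x hx hle
  have h11 : H Wt Wt ≤ -(θ₁ * θ₂) * ‖Wt‖ ^ 2 := by
    have h := hII x hx hpos hle Wt htan
    have : -θ₂ * ‖gradient φ₀ x‖ * ‖Wt‖ ^ 2 ≤ -(θ₁ * θ₂) * ‖Wt‖ ^ 2 := by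
      nlinarith [mul_nonneg (mul_nonneg hθ₂.le (sub_nonneg.2 ht1)) (sq_nonneg ‖Wt‖)]
    linarith
  have h12 : H Wt Wp ≤ A / 2 * ‖Wt‖ * ‖Wp‖ := le_of_abs_le (hC2x Wt Wp)
  have h21 : H Wp Wt ≤ A / 2 * ‖Wp‖ * ‖Wt‖ := le_of_abs_le (hC2x Wp Wt)
  have h22 : H Wp Wp ≤ A / 2 * ‖Wp‖ * ‖Wp‖ := le_of_abs_le (hC2x Wp Wp)
  have ht : (0:ℝ) ≤ ‖Wt‖ := norm_nonneg _
  have hp : (0:ℝ) ≤ ‖Wp‖ := norm_nonneg _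
  have hθ : 0 < θ₁ * θ₂ := mul_pos hθ₁ hθ₂
  have key : -(θ₁ * θ₂) * ‖Wt‖ ^ 2 + A * ‖Wt‖ * ‖Wp‖ + A / 2 * ‖Wp‖ * ‖Wp‖ ≤
      -(θ₁ * θ₂ / 2) * ‖Wt‖ ^ 2 + ((A ^ 2 / (θ₁ * θ₂) + A) / 2) * ‖Wp‖ ^ 2 := by
    have hexp : (A ^ 2 / (θ₁ * θ₂) + A) / 2 * ‖Wp‖ ^ 2 =
        A ^ 2 * ‖Wp‖ ^ 2 / (θ₁ * θ₂ * 2) + A / 2 * ‖Wp‖ ^ 2 := by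
      field_simp
    have hexpand : (θ₁ * θ₂ * ‖Wt‖ - A * ‖Wp‖) ^ 2 / (θ₁ * θ₂ * 2) =
        θ₁ * θ₂ / 2 * ‖Wt‖ ^ 2 - A * ‖Wt‖ * ‖Wp‖ + A ^ 2 * ‖Wp‖ ^ 2 / (θ₁ * θ₂ * 2) := by
      field_simp; ring
    have hnn : (0:ℝ) ≤ (θ₁ * θ₂ * ‖Wt‖ - A * ‖Wp‖) ^ 2 / (θ₁ * θ₂ * 2) := by positivity
    rw [hexp]
    rw [hexpand] at hnn
    nlinarith [hnn, sq_nonneg ‖Wp‖]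
  nlinarith [key]
end
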